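/- arXiv:2011.02741 — 5 statements merged into one kernel-verified Lean document; each statement's English description precedes it below -/
import Mathlib

section
/- Let (X, G, Φ) be a dynamical system where X is a compact totally disconnected Hausdorff space. Then (X, G, Φ) is mixing if and only if (X, G, Φ) is conjugate to the inverse limit of an inverse system of dynamical systems, satisfying the Mittag-Leffler condition, each of whose terms is a mixing subshift (a closed shift-invariant subset of a full shift over some finite alphabet, with the shift G-action). -/
open Set

universe u

/-! ### Dynamical systems: actions of a countable discrete group by homeomorphisms -/

/-- An action of a group `G` on a topological space `X`: each `act g` is a homeomorphism
(continuity of the inverse follows from `act g⁻¹`). -/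
structure DynAction (G X : Type u) [Group G] [TopologicalSpace X] where
  act : G → X → X
  continuous_act : ∀ g : G, Continuous (act g)
  act_one : ∀ x : X, act 1 x = x
  act_mul : ∀ (g g' : G) (x : X), act (g * g') x = act g (act g' x)

section Covers

variable {G X : Type u} [Group G] [TopologicalSpace X]

/-- A finite open cover of `X`. -/
def IsFOC (𝒰 : Finset (Set X)) : Prop :=
  (∀ U ∈ 𝒰, IsOpen U) ∧ ⋃₀ (𝒰 : Set (Set X)) = Set.univ

/-- A finite partition of `X` into nonempty clopen sets. -/
def IsClopenPartition (𝒰 : Finset (Set X)) : Prop :=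
  (∀ U ∈ 𝒰, IsClopen U ∧ U.Nonempty) ∧ ⋃₀ (𝒰 : Set (Set X)) = Set.univ ∧
    ∀ U ∈ 𝒰, ∀ V ∈ 𝒰, U ≠ V → U ∩ V = ∅

/-- `𝒱` refines `𝒰`: every member of `𝒱` is contained in a member of `𝒰`. -/
def Refines (𝒱 𝒰 : Finset (Set X)) : Prop :=
  ∀ V ∈ 𝒱, ∃ U ∈ 𝒰, V ⊆ U

/-- `{U g}` is a pattern of the `(S,𝒰)`-pseudo-orbit `{x g}`:
all `U g` belong to `𝒰`, and `x (s*g) ∈ U (s*g)` and `Φ_s (x g) ∈ U (s*g)`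
for all `g ∈ G`, `s ∈ S`. -/
def IsPseudoOrbitPattern (Φ : DynAction G X) (S : Set G) (𝒰 : Finset (Set X))
    (x : G → X) (U : G → Set X) : Prop :=
  (∀ g : G, U g ∈ 𝒰) ∧
    ∀ g : G, ∀ s ∈ S, x (s * g) ∈ U (s * g) ∧ Φ.act s (x g) ∈ U (s * g)

/-- `{x g}` is an `(S,𝒰)`-pseudo-orbit. -/
def IsPseudoOrbit (Φ : DynAction G X) (S : Set G) (𝒰 : Finset (Set X)) (x : G → X) : Prop :=
  ∃ U : G → Set X, IsPseudoOrbitPattern Φ S 𝒰 x U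

/-- `z` `𝒰`-shadows the family `{x g}`. -/
def Shadows (Φ : DynAction G X) (𝒰 : Finset (Set X)) (z : X) (x : G → X) : Prop :=
  ∀ g : G, ∃ U ∈ 𝒰, Φ.act g z ∈ U ∧ x g ∈ U

/-- The (topological) `S`-shadowing property. -/
def ShadowingProperty (Φ : DynAction G X) (S : Set G) : Prop :=
  ∀ 𝒰 : Finset (Set X), IsFOC 𝒰 → ∃ 𝒱 : Finset (Set X), IsFOC 𝒱 ∧
    ∀ x : G → X, IsPseudoOrbit Φ S 𝒱 x → ∃ z : X, Shadows Φ 𝒰 z x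

/-! ### Equivariant maps, factor maps, conjugacies -/

def IsEquivariant {Y : Type u} [TopologicalSpace Y]
    (ΦX : DynAction G X) (ΦY : DynAction G Y) (f : X → Y) : Prop :=
  ∀ (g : G) (x : X), f (ΦX.act g x) = ΦY.act g (f x)

/-- `f` is a factor map from `(X,G,ΦX)` onto `(Y,G,ΦY)`. -/
def IsFactorMap {Y : Type u} [TopologicalSpace Y]
    (ΦX : DynAction G X) (ΦY : DynAction G Y) (f : X → Y) : Prop :=
  Continuous f ∧ Function.Surjective f ∧ IsEquivariant ΦX ΦY f

/-- `f` is a conjugacy (bijective factor map). -/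
def IsConjugacy {Y : Type u} [TopologicalSpace Y]
    (ΦX : DynAction G X) (ΦY : DynAction G Y) (f : X → Y) : Prop :=
  Continuous f ∧ Function.Bijective f ∧ IsEquivariant ΦX ΦY f

end Covers

/-! ### Shifts, subshifts, shifts of finite type -/

/-- The shift action on `A^G`: `(σ_g x) h = x (h * g)`. -/
def shift (G A : Type u) [Group G] (g : G) (x : G → A) : G → A :=
  fun h => x (h * g)

/-- The full shift `A^G` (product topology) as a dynamical system. -/
def shiftDyn (G A : Type u) [Group G] [TopologicalSpace A] : DynAction G (G → A) where
  act := shift G A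
  continuous_act g := continuous_pi fun h => continuous_apply (h * g)
  act_one x := by funext h; simp [shift]
  act_mul g g' x := by funext h; simp [shift, mul_assoc]

/-- A subshift: a closed shift-invariant subset of the full shift `A^G`. -/
def IsSubshift {G A : Type u} [Group G] [TopologicalSpace A] (Y : Set (G → A)) : Prop :=
  IsClosed Y ∧ ∀ g : G, ∀ x ∈ Y, shift G A g x ∈ Y

/-- The cylinder set determined by the values of `P` on the finite shape `B`. -/
def cylinder {G A : Type u} (B : Finset G) (P : G → A) : Set (G → A) :=
  {y | ∀ b ∈ B, y b = P b}

/-- The language of `Y ⊆ A^G` over the finite shape `B` (a pattern is recorded by any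
function `G → A` with the prescribed values on `B`). -/
def language {G A : Type u} (B : Finset G) (Y : Set (G → A)) : Set (G → A) :=
  {P | (cylinder B P ∩ Y).Nonempty}

/-- `Y` is a shift of finite type over the finite shape `B`: it is cut out by a family of
forbidden patterns on `B`. -/
def IsSFTOver {G A : Type u} [Group G] (B : Finset G) (Y : Set (G → A)) : Prop :=
  ∃ ℱ : Set (G → A), Y = {x | ∀ g : G, ∀ P ∈ ℱ, shift G A g x ∉ cylinder B P}

/-- The shift action restricted to a subshift. -/
def subshiftDyn {G A : Type u} [Group G] [TopologicalSpace A] (Y : Set (G → A))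
    (hY : IsSubshift Y) : DynAction G ↥Y where
  act g x := ⟨shift G A g x.1, hY.2 g x.1 x.2⟩
  continuous_act g := Continuous.subtype_mk
    ((continuous_pi fun h => continuous_apply (h * g)).comp continuous_subtype_val) _
  act_one x := by apply Subtype.ext; funext h; simp [shift]
  act_mul g g' x := by apply Subtype.ext; funext h; simp [shift, mul_assoc]

/-! ### Hitting time sets and mixing-type properties -/

section Mixing

variable {G X : Type u} [Group G] [TopologicalSpace X]

/-- The hitting time set `N(U,V) = {g ≠ e : U ∩ Φ_{g⁻¹}(V) ≠ ∅}`. -/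
def hittingTimes (Φ : DynAction G X) (U V : Set X) : Set G :=
  {g : G | g ≠ 1 ∧ (U ∩ Φ.act g⁻¹ '' V).Nonempty}

/-- Topological mixing: `G \ N(U,V)` is finite for all nonempty open `U, V`. -/
def IsMixing (Φ : DynAction G X) : Prop :=
  ∀ U V : Set X, IsOpen U → IsOpen V → U.Nonempty → V.Nonempty →
    ((hittingTimes Φ U V)ᶜ : Set G).Finite

/-- Minimality: there is no nonempty proper closed invariant subset. -/
def IsMinimal (Φ : DynAction G X) : Prop :=
  ∀ K : Set X, IsClosed K → (∀ g : G, ∀ x ∈ K, Φ.act g x ∈ K) →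
    K = ∅ ∨ K = Set.univ

end Mixing

/-! ### Inverse systems of subshifts -/

/-- An inverse system of dynamical systems whose terms are subshifts over finite
(discrete) alphabets, with the shift `G`-action. -/
structure SubshiftInvSys (G : Type u) [Group G] (Λ : Type u) [Preorder Λ] where
  A : Λ → Type u
  [topoA : ∀ l, TopologicalSpace (A l)]
  [discA : ∀ l, DiscreteTopology (A l)]
  [finA : ∀ l, Finite (A l)]
  Y : ∀ l : Λ, Set (G → A l)
  subshift : ∀ l : Λ, IsSubshift (Y l)
  bond : ∀ {l m : Λ}, l ≤ m → ↥(Y m) → ↥(Y l)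
  bond_cont : ∀ {l m : Λ} (h : l ≤ m), Continuous (bond h)
  bond_refl : ∀ (l : Λ) (x : ↥(Y l)), bond (le_refl l) x = x
  bond_comp : ∀ {l m n : Λ} (h1 : l ≤ m) (h2 : m ≤ n) (x : ↥(Y n)),
    bond h1 (bond h2 x) = bond (h1.trans h2) x
  bond_equivariant : ∀ {l m : Λ} (h : l ≤ m) (g : G) (x : ↥(Y m)),
    (subshiftDyn (Y l) (subshift l)).act g (bond h x)
      = bond h ((subshiftDyn (Y m) (subshift m)).act g x)

namespace SubshiftInvSys

variable {G Λ : Type u} [Group G] [Preorder Λ]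

instance (𝒮 : SubshiftInvSys G Λ) (l : Λ) : TopologicalSpace (𝒮.A l) := 𝒮.topoA l
instance (𝒮 : SubshiftInvSys G Λ) (l : Λ) : DiscreteTopology (𝒮.A l) := 𝒮.discA l
instance (𝒮 : SubshiftInvSys G Λ) (l : Λ) : Finite (𝒮.A l) := 𝒮.finA l

/-- The `G`-action on the term `Y l` (the restricted shift). -/
def termDyn (𝒮 : SubshiftInvSys G Λ) (l : Λ) : DynAction G ↥(𝒮.Y l) :=
  subshiftDyn (𝒮.Y l) (𝒮.subshift l)

/-- The inverse limit of the system, as a subset of the product. -/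
def limitSet (𝒮 : SubshiftInvSys G Λ) : Set (∀ l : Λ, ↥(𝒮.Y l)) :=
  {x | ∀ (l m : Λ) (h : l ≤ m), 𝒮.bond h (x m) = x l}

lemma act_mem_limitSet (𝒮 : SubshiftInvSys G Λ) (g : G) (x : ∀ l : Λ, ↥(𝒮.Y l))
    (hx : x ∈ 𝒮.limitSet) : (fun l => (𝒮.termDyn l).act g (x l)) ∈ 𝒮.limitSet := by
  intro l m h
  show 𝒮.bond h ((𝒮.termDyn m).act g (x m)) = (𝒮.termDyn l).act g (x l)
  rw [show (𝒮.termDyn m).act g (x m)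
        = (subshiftDyn (𝒮.Y m) (𝒮.subshift m)).act g (x m) from rfl,
      ← 𝒮.bond_equivariant h g (x m)]
  show (𝒮.termDyn l).act g (𝒮.bond h (x m)) = _
  rw [hx l m h]

/-- The induced `G`-action `σ*` on the inverse limit. -/
def limitDyn (𝒮 : SubshiftInvSys G Λ) : DynAction G ↥𝒮.limitSet where
  act g x := ⟨fun l => (𝒮.termDyn l).act g (x.1 l), 𝒮.act_mem_limitSet g x.1 x.2⟩
  continuous_act g := Continuous.subtype_mk
    (continuous_pi fun l => ((𝒮.termDyn l).continuous_act g).comp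
      ((continuous_apply l).comp continuous_subtype_val)) _
  act_one x := by
    apply Subtype.ext; funext l
    exact (𝒮.termDyn l).act_one (x.1 l)
  act_mul g g' x := by
    apply Subtype.ext; funext l
    exact (𝒮.termDyn l).act_mul g g' (x.1 l)

/-- The Mittag-Leffler condition. -/
def ML (𝒮 : SubshiftInvSys G Λ) : Prop :=
  ∀ l : Λ, ∃ m : Λ, ∃ h : l ≤ m, ∀ (n : Λ) (h' : m ≤ n),
    Set.range (𝒮.bond (h.trans h')) = Set.range (𝒮.bond h)

end SubshiftInvSys

/-- An inverse system of subshifts over some directed index set, packaged together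
with its (directed, preordered) index. -/
structure SubshiftInvSysPkg (G : Type u) [Group G] where
  Idx : Type u
  [pre : Preorder Idx]
  directed : IsDirected Idx (· ≤ ·)
  sys : SubshiftInvSys G Idx

namespace SubshiftInvSysPkg

variable {G : Type u} [Group G]

instance (P : SubshiftInvSysPkg G) : Preorder P.Idx := P.pre

end SubshiftInvSysPkg

/-! ### Auxiliary material for the proof -/

section AuxGeneral

variable {G X : Type} [Group G] [TopologicalSpace X]

lemma DynAction.act_inv_act (Φ : DynAction G X) (g : G) (x : X) :
    Φ.act g⁻¹ (Φ.act g x) = x := by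
  rw [← Φ.act_mul, inv_mul_cancel, Φ.act_one]

lemma DynAction.act_act_inv (Φ : DynAction G X) (g : G) (x : X) :
    Φ.act g (Φ.act g⁻¹ x) = x := by
  rw [← Φ.act_mul, mul_inv_cancel, Φ.act_one]

/-- Mixing passes to factors. -/
lemma isMixing_of_factor {Y : Type} [TopologicalSpace Y]
    {ΦX : DynAction G X} {ΦY : DynAction G Y} {f : X → Y}
    (hf : IsFactorMap ΦX ΦY f) (hmix : IsMixing ΦX) : IsMixing ΦY := by
  obtain ⟨hc, hs, he⟩ := hf
  intro U V hU hV hUne hVne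
  have h1 : hittingTimes ΦX (f ⁻¹' U) (f ⁻¹' V) ⊆ hittingTimes ΦY U V := by
    rintro g ⟨hg, x, hxU, w, hwV, hwx⟩
    exact ⟨hg, f x, hxU, f w, hwV, by rw [← hwx, he]⟩
  exact (hmix (f ⁻¹' U) (f ⁻¹' V) (hU.preimage hc) (hV.preimage hc)
    (hUne.preimage hs) (hVne.preimage hs)).subset (compl_subset_compl.mpr h1)

end AuxGeneral

/-! ### The forward construction: itineraries along finite families of clopen sets -/

section Forward

variable {G X : Type} [Group G] [TopologicalSpace X]

/-- The index type: finite families of clopen subsets of `X`. -/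
abbrev ClopIdx (X : Type) [TopologicalSpace X] : Type := Finset {s : Set X // IsClopen s}

/-- The itinerary of `x` with respect to the family `S` of clopen sets. -/
noncomputable def itin (Φ : DynAction G X) (S : ClopIdx X) (x : X) : G → ({s // s ∈ S} → Bool) :=
  fun g s => (s.1.1).boolIndicator (Φ.act g x)

lemma continuous_itin (Φ : DynAction G X) (S : ClopIdx X) : Continuous (itin Φ S) :=
  continuous_pi fun g => continuous_pi fun s =>
    ((continuous_boolIndicator_iff_isClopen _).mpr s.1.2).comp (Φ.continuous_act g)

lemma itin_shift (Φ : DynAction G X) (S : ClopIdx X) (g : G) (x : X) :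
    shift G _ g (itin Φ S x) = itin Φ S (Φ.act g x) := by
  funext h s
  simp [shift, itin, Φ.act_mul]

/-- Restriction of an itinerary-alphabet symbol along `S ≤ T`. -/
def restr {S T : ClopIdx X} (h : S ≤ T) (y : G → ({s // s ∈ T} → Bool)) :
    G → ({s // s ∈ S} → Bool) :=
  fun g s => y g ⟨s.1, h s.2⟩

lemma restr_itin (Φ : DynAction G X) {S T : ClopIdx X} (h : S ≤ T) (x : X) :
    restr h (itin Φ T x) = itin Φ S x := rfl

variable [CompactSpace X] [T2Space X]

/-- The inverse system of itinerary subshifts. -/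
noncomputable def itinSys (Φ : DynAction G X) : SubshiftInvSys G (ClopIdx X) where
  A S := {s // s ∈ S} → Bool
  topoA := fun _ => inferInstance
  discA := fun _ => inferInstance
  finA := fun _ => inferInstance
  Y S := Set.range (itin Φ S)
  subshift S := ⟨(isCompact_range (continuous_itin Φ S)).isClosed, by
    rintro g _ ⟨x, rfl⟩; exact ⟨Φ.act g x, (itin_shift Φ S g x).symm⟩⟩
  bond h y := ⟨restr h y.1, by obtain ⟨x, hx⟩ := y.2; exact ⟨x, by rw [← hx, restr_itin]⟩⟩
  bond_cont h := by
    apply Continuous.subtype_mk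
    exact continuous_pi fun g => continuous_pi fun s =>
      (continuous_apply _).comp ((continuous_apply g).comp continuous_subtype_val)
  bond_refl S x := rfl
  bond_comp h1 h2 x := rfl
  bond_equivariant h g x := rfl

lemma itinSys_bond_surjective (Φ : DynAction G X) {S T : ClopIdx X} (h : S ≤ T) :
    Function.Surjective ((itinSys Φ).bond h) := by
  intro y
  obtain ⟨x, hx⟩ := (y.2 : y.1 ∈ Set.range (itin Φ S))
  refine ⟨⟨itin Φ T x, Set.mem_range_self x⟩, Subtype.ext ?_⟩
  show restr h (itin Φ T x) = y.1
  rw [restr_itin, hx]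

lemma itinSys_ML (Φ : DynAction G X) : (itinSys Φ).ML := by
  intro l
  refine ⟨l, le_refl l, fun n h' => ?_⟩
  rw [(itinSys_bond_surjective Φ _).range_eq, (itinSys_bond_surjective Φ _).range_eq]

/-- The corestricted itinerary map is a factor map onto each term. -/
lemma itinSys_factor (Φ : DynAction G X) (S : ClopIdx X) :
    IsFactorMap Φ ((itinSys Φ).termDyn S)
      (fun x => (⟨itin Φ S x, Set.mem_range_self x⟩ : ↥((itinSys Φ).Y S))) := by
  refine ⟨Continuous.subtype_mk (continuous_itin Φ S) _, ?_, ?_⟩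
  · rintro ⟨_, x, rfl⟩; exact ⟨x, rfl⟩
  · intro g x
    exact Subtype.ext (itin_shift Φ S g x).symm

/-- The canonical map into the inverse limit. -/
noncomputable def toLimit (Φ : DynAction G X) (x : X) : ∀ S : ClopIdx X, ↥((itinSys Φ).Y S) :=
  fun S => ⟨itin Φ S x, Set.mem_range_self x⟩

lemma toLimit_mem (Φ : DynAction G X) (x : X) : toLimit Φ x ∈ (itinSys Φ).limitSet :=
  fun _ _ _ => Subtype.ext rfl

end Forward

/-! ### Inverse limits: compactness and lifting under ML -/

section Limits

variable {G Λ : Type} [Group G] [Preorder Λ]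

instance instCompactTermY (𝒮 : SubshiftInvSys G Λ) (l : Λ) : CompactSpace ↥(𝒮.Y l) :=
  isCompact_iff_compactSpace.mp ((𝒮.subshift l).1.isCompact)

/-- Lifting a point of `Y m` (in the stable range) to the inverse limit, using
compactness and the ML condition. -/
lemma exists_limit_lift (𝒮 : SubshiftInvSys G Λ) [IsDirected Λ (· ≤ ·)]
    (z₀ : ∀ l, ↥(𝒮.Y l))
    {m m₀ : Λ} (hm : m ≤ m₀)
    (hstab : ∀ (n : Λ) (h' : m₀ ≤ n),
      Set.range (𝒮.bond (hm.trans h')) = Set.range (𝒮.bond hm))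
    (y : ↥(𝒮.Y m)) (hy : y ∈ Set.range (𝒮.bond hm)) :
    ∃ z ∈ 𝒮.limitSet, z m = y := by
  classical
  haveI : Nonempty Λ := ⟨m⟩
  set C : Finset Λ → Set (∀ l, ↥(𝒮.Y l)) := fun F =>
    {z | (∀ p ∈ F, ∀ q ∈ F, ∀ h : p ≤ q, 𝒮.bond h (z q) = z p) ∧ z m = y} with hC
  have hC_closed : ∀ F, IsClosed (C F) := by
    intro F
    have h1 : IsClosed {z : ∀ l, ↥(𝒮.Y l) |
        ∀ p ∈ F, ∀ q ∈ F, ∀ h : p ≤ q, 𝒮.bond h (z q) = z p} := by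
      have heq : {z : ∀ l, ↥(𝒮.Y l) | ∀ p ∈ F, ∀ q ∈ F, ∀ h : p ≤ q, 𝒮.bond h (z q) = z p}
          = ⋂ p ∈ F, ⋂ q ∈ F, ⋂ h : p ≤ q, {z | 𝒮.bond h (z q) = z p} := by
        ext z; simp
      rw [heq]
      exact isClosed_biInter fun p _ => isClosed_biInter fun q _ => isClosed_iInter fun h =>
        isClosed_eq ((𝒮.bond_cont h).comp (continuous_apply q)) (continuous_apply p)
    have h2 : IsClosed {z : ∀ l, ↥(𝒮.Y l) | z m = y} :=
      isClosed_eq (continuous_apply m) continuous_const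
    exact h1.inter h2
  have hC_ne : ∀ F, (C F).Nonempty := by
    intro F
    obtain ⟨u, hu⟩ := (insert m₀ F).exists_le
    have hm₀u : m₀ ≤ u := hu m₀ (Finset.mem_insert_self _ _)
    have hy' : y ∈ Set.range (𝒮.bond (hm.trans hm₀u)) := by
      rw [hstab u hm₀u]; exact hy
    obtain ⟨w, hw⟩ := hy'
    refine ⟨fun l => if h : l ≤ u then 𝒮.bond h w else z₀ l, ?_, ?_⟩
    · intro p hp q hq h
      have hpu : p ≤ u := hu p (Finset.mem_insert_of_mem hp)
      have hqu : q ≤ u := hu q (Finset.mem_insert_of_mem hq)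
      simp only [dif_pos hpu, dif_pos hqu]
      exact 𝒮.bond_comp h hqu w
    · have hmu : m ≤ u := hm.trans hm₀u
      simp only [dif_pos hmu]
      exact hw
  have hC_dir : Directed (· ⊇ ·) C := by
    intro F F'
    refine ⟨F ∪ F', fun z hz => ⟨fun p hp q hq h =>
        hz.1 p (Finset.mem_union_left _ hp) q (Finset.mem_union_left _ hq) h, hz.2⟩,
      fun z hz => ⟨fun p hp q hq h =>
        hz.1 p (Finset.mem_union_right _ hp) q (Finset.mem_union_right _ hq) h, hz.2⟩⟩
  obtain ⟨z, hz⟩ := IsCompact.nonempty_iInter_of_directed_nonempty_isCompact_isClosed C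
    hC_dir hC_ne (fun F => (hC_closed F).isCompact) hC_closed
  simp only [Set.mem_iInter] at hz
  refine ⟨z, fun p q h => ?_, (hz ∅).2⟩
  exact (hz {p, q}).1 p (by simp) q (by simp) h

lemma SubshiftInvSys.bond_term_equivariant (𝒮 : SubshiftInvSys G Λ) {l m : Λ} (h : l ≤ m)
    (g : G) (x : ↥(𝒮.Y m)) :
    (𝒮.termDyn l).act g (𝒮.bond h x) = 𝒮.bond h ((𝒮.termDyn m).act g x) :=
  𝒮.bond_equivariant h g x

/-- The inverse limit of an ML system of mixing subshifts is mixing. -/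
lemma isMixing_limitDyn (𝒮 : SubshiftInvSys G Λ) [IsDirected Λ (· ≤ ·)]
    (hML : 𝒮.ML) (hmix : ∀ l, IsMixing (𝒮.termDyn l)) : IsMixing 𝒮.limitDyn := by
  classical
  intro U V hU hV hUne hVne
  obtain ⟨zU, hzU⟩ := hUne
  obtain ⟨zV, hzV⟩ := hVne
  cases isEmpty_or_nonempty Λ with
  | inl hempty =>
    haveI : Subsingleton ↥(𝒮.limitSet) :=
      ⟨fun a b => Subtype.ext (funext fun l => isEmptyElim l)⟩
    refine Set.Finite.subset (Set.finite_singleton 1) ?_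
    intro g hg
    simp only [hittingTimes, Set.mem_compl_iff, Set.mem_setOf_eq, not_and] at hg
    by_contra hg1
    refine hg hg1 ⟨zU, hzU, 𝒮.limitDyn.act g zU, ?_, 𝒮.limitDyn.act_inv_act g zU⟩
    rw [Subsingleton.elim (𝒮.limitDyn.act g zU) zV]; exact hzV
  | inr hne =>
    -- extract basic open data
    obtain ⟨U', hU'o, hU'⟩ := isOpen_induced_iff.mp hU
    obtain ⟨V', hV'o, hV'⟩ := isOpen_induced_iff.mp hV
    have hzU' : zU.1 ∈ U' := by rw [← hU'] at hzU; exact hzU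
    have hzV' : zV.1 ∈ V' := by rw [← hV'] at hzV; exact hzV
    obtain ⟨FU, WU, hWU, hpiU⟩ := isOpen_pi_iff.mp hU'o zU.1 hzU'
    obtain ⟨FV, WV, hWV, hpiV⟩ := isOpen_pi_iff.mp hV'o zV.1 hzV'
    obtain ⟨m, hmub⟩ := (FU ∪ FV).exists_le
    obtain ⟨m₀, hm, hstab⟩ := hML m
    -- the evaluation map at level m
    set Θ : ↥(𝒮.Y m) → ∀ l, ↥(𝒮.Y l) :=
      fun w l => if h : l ≤ m then 𝒮.bond h w else zU.1 l with hΘdef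
    have hΘcont : Continuous Θ := continuous_pi fun l => by
      rw [hΘdef]
      by_cases h : l ≤ m
      · simp only [dif_pos h]; exact (𝒮.bond_cont h).comp continuous_id
      · simp only [dif_neg h]; exact continuous_const
    let UM : Set ↥(𝒮.Y m) := Θ ⁻¹' ((FU : Set Λ).pi WU)
    let VM : Set ↥(𝒮.Y m) := Θ ⁻¹' ((FV : Set Λ).pi WV)
    have hΘ_of_limit : ∀ z ∈ 𝒮.limitSet, Θ (z m) = fun l =>
        if h : l ≤ m then z l else zU.1 l := by
      intro z hz
      funext l
      rw [hΘdef]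
      by_cases h : l ≤ m
      · simp only [dif_pos h]; exact hz l m h
      · simp only [dif_neg h]
    have hkeyU : ∀ z (hz : z ∈ 𝒮.limitSet), z m ∈ UM →
        (⟨z, hz⟩ : ↥𝒮.limitSet) ∈ U := by
      intro z hz hzm
      rw [← hU']
      refine hpiU ?_
      intro l hl
      have hlm : l ≤ m := hmub l (Finset.mem_union_left _ hl)
      have := hzm l hl
      rw [hΘ_of_limit z hz] at this
      simpa only [dif_pos hlm] using this
    have hkeyV : ∀ z (hz : z ∈ 𝒮.limitSet), z m ∈ VM →
        (⟨z, hz⟩ : ↥𝒮.limitSet) ∈ V := by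
      intro z hz hzm
      rw [← hV']
      refine hpiV ?_
      intro l hl
      have hlm : l ≤ m := hmub l (Finset.mem_union_right _ hl)
      have := hzm l hl
      rw [hΘ_of_limit z hz] at this
      simpa only [dif_pos hlm] using this
    have hzUM : zU.1 m ∈ UM := by
      intro l hl
      have hlm : l ≤ m := hmub l (Finset.mem_union_left _ hl)
      rw [hΘ_of_limit zU.1 zU.2]
      simpa only [dif_pos hlm] using (hWU l hl).2
    have hzVM : zV.1 m ∈ VM := by
      intro l hl
      have hlm : l ≤ m := hmub l (Finset.mem_union_right _ hl)
      rw [hΘ_of_limit zV.1 zV.2]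
      simpa only [dif_pos hlm] using (hWV l hl).2
    -- pull back to level m₀
    let U₀ : Set ↥(𝒮.Y m₀) := 𝒮.bond hm ⁻¹' UM
    let V₀ : Set ↥(𝒮.Y m₀) := 𝒮.bond hm ⁻¹' VM
    have hU₀o : IsOpen U₀ := ((isOpen_set_pi FU.finite_toSet fun l hl =>
      (hWU l hl).1).preimage hΘcont).preimage (𝒮.bond_cont hm)
    have hV₀o : IsOpen V₀ := ((isOpen_set_pi FV.finite_toSet fun l hl =>
      (hWV l hl).1).preimage hΘcont).preimage (𝒮.bond_cont hm)
    have hU₀ne : U₀.Nonempty := ⟨zU.1 m₀, by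
      show 𝒮.bond hm (zU.1 m₀) ∈ UM
      rw [zU.2 m m₀ hm]; exact hzUM⟩
    have hV₀ne : V₀.Nonempty := ⟨zV.1 m₀, by
      show 𝒮.bond hm (zV.1 m₀) ∈ VM
      rw [zV.2 m m₀ hm]; exact hzVM⟩
    refine Set.Finite.subset (hmix m₀ U₀ V₀ hU₀o hV₀o hU₀ne hV₀ne) (compl_subset_compl.mpr ?_)
    rintro g ⟨hg, x, hxU₀, x', hx'V₀, hxx'⟩
    obtain ⟨z, hzlim, hzm⟩ := exists_limit_lift 𝒮 zU.1 hm hstab (𝒮.bond hm x) ⟨x, rfl⟩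
    have hzU'' : (⟨z, hzlim⟩ : ↥𝒮.limitSet) ∈ U := hkeyU z hzlim (by rw [hzm]; exact hxU₀)
    have hactx : (𝒮.termDyn m₀).act g x = x' := by
      rw [← hxx']; exact (𝒮.termDyn m₀).act_act_inv g x'
    have hactlim : 𝒮.limitDyn.act g ⟨z, hzlim⟩ ∈ V := by
      have hmem : (𝒮.limitDyn.act g ⟨z, hzlim⟩).1 m ∈ VM := by
        show (𝒮.termDyn m).act g (z m) ∈ VM
        rw [hzm, 𝒮.bond_term_equivariant hm g x, hactx]
        exact hx'V₀
      exact hkeyV _ (𝒮.limitDyn.act g ⟨z, hzlim⟩).2 hmem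
    exact ⟨hg, ⟨z, hzlim⟩, hzU'', 𝒮.limitDyn.act g ⟨z, hzlim⟩, hactlim,
      𝒮.limitDyn.act_inv_act g ⟨z, hzlim⟩⟩

end Limits

/-- **Theorem 1.4 (mixing case).** For a compact totally disconnected Hausdorff space,
`Φ` is mixing iff `(X,G,Φ)` is conjugate to the inverse limit of an ML inverse system of
mixing subshifts. -/
theorem mixing_iff_conjugate_invlim_mixing_subshifts
    {G X : Type} [Group G] [Countable G] [TopologicalSpace X]
    [CompactSpace X] [T2Space X] [TotallyDisconnectedSpace X]
    (Φ : DynAction G X) :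
    IsMixing Φ ↔
      ∃ P : SubshiftInvSysPkg G,
        P.sys.ML ∧
        (∀ l : P.Idx, IsMixing (P.sys.termDyn l)) ∧
        ∃ f : X → ↥P.sys.limitSet, IsConjugacy Φ P.sys.limitDyn f := by
  constructor
  · -- forward direction
    intro hmix
    refine ⟨{ Idx := ClopIdx X, directed := inferInstance, sys := itinSys Φ }, itinSys_ML Φ,
      fun S => isMixing_of_factor (itinSys_factor Φ S) hmix, ?_⟩
    refine ⟨fun x => ⟨toLimit Φ x, toLimit_mem Φ x⟩, ?_, ⟨?_, ?_⟩, ?_⟩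
    · exact Continuous.subtype_mk (continuous_pi fun S =>
        Continuous.subtype_mk (continuous_itin Φ S) _) _
    · -- injective
      intro x y hxy
      by_contra hne
      haveI : TotallySeparatedSpace X := loc_compact_t2_tot_disc_iff_tot_sep.mp ‹_›
      obtain ⟨s, hs, hxs, hys⟩ := exists_isClopen_of_totally_separated hne
      have h1 := congrArg (fun z => (z.1 ({⟨s, hs⟩} : ClopIdx X)).1 1
        ⟨⟨s, hs⟩, Finset.mem_singleton_self _⟩) hxy
      simp only [toLimit, itin, Φ.act_one] at h1
      rw [(s.mem_iff_boolIndicator x).mp hxs,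
        eq_comm, (s.mem_iff_boolIndicator y).symm] at h1
      exact hys h1
    · -- surjective
      classical
      intro z
      set K : ClopIdx X → Set X := fun S => itin Φ S ⁻¹' {(z.1 S).1} with hK
      have hK_closed : ∀ S, IsClosed (K S) :=
        fun S => (isClosed_singleton).preimage (continuous_itin Φ S)
      have hK_ne : ∀ S, (K S).Nonempty := by
        intro S
        obtain ⟨x, hx⟩ := (z.1 S).2
        exact ⟨x, hx⟩
      have hK_anti : ∀ {S T : ClopIdx X}, S ≤ T → K T ⊆ K S := by
        intro S T h x hx
        have hb := congrArg Subtype.val (z.2 S T h)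
        have hxT : itin Φ T x = (z.1 T).1 := hx
        show itin Φ S x = (z.1 S).1
        calc itin Φ S x = restr h (itin Φ T x) := rfl
          _ = restr h (z.1 T).1 := by rw [hxT]
          _ = @id (G → ({s // s ∈ S} → Bool)) (z.1 S).1 := hb
      have hK_dir : Directed (· ⊇ ·) K := fun S T =>
        ⟨S ⊔ T, hK_anti le_sup_left, hK_anti le_sup_right⟩
      obtain ⟨x, hx⟩ := IsCompact.nonempty_iInter_of_directed_nonempty_isCompact_isClosed K
        hK_dir hK_ne (fun S => (hK_closed S).isCompact) hK_closed
      simp only [Set.mem_iInter] at hx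
      exact ⟨x, Subtype.ext (funext fun S => Subtype.ext (hx S))⟩
    · -- equivariant
      intro g x
      refine Subtype.ext (funext fun S => Subtype.ext ?_)
      exact (itin_shift Φ S g x).symm
  · -- backward direction
    rintro ⟨P, hML, hterm, f, hfc, hfb, hfe⟩
    haveI := P.directed
    have hlim : IsMixing P.sys.limitDyn := isMixing_limitDyn P.sys hML hterm
    let e : X ≃ₜ ↥P.sys.limitSet :=
      Continuous.homeoOfEquivCompactToT2 (f := Equiv.ofBijective f hfb) hfc
    have hfinv : ∀ y, f (e.symm y) = y := fun y => e.apply_symm_apply y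
    have hinj := hfb.1
    refine isMixing_of_factor (f := e.symm) ⟨e.symm.continuous, e.symm.surjective, ?_⟩ hlim
    intro g y
    apply hinj
    rw [hfinv, hfe, hfinv]
end

section
/- Let (X, G, Φ) be a dynamical system where X is a compact metric space. Then (X, G, Φ) is mixing if and only if (X, G, Φ) is a factor of the inverse limit of an inverse system of dynamical systems, satisfying the Mittag-Leffler condition, each of whose terms is a mixing subshift (a closed shift-invariant subset of a full shift over some finite alphabet, with the shift G-action). -/
open Set

universe u

/-! ### Auxiliary lemmas -/

section AuxGeneral

variable {G X : Type} [Group G] [TopologicalSpace X]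

lemma DynAction.act_act (Φ : DynAction G X) (g g' : G) (x : X) :
    Φ.act g (Φ.act g' x) = Φ.act (g * g') x := (Φ.act_mul g g' x).symm

lemma mem_hittingTimes_iff {Φ : DynAction G X} {U V : Set X} {g : G} :
    g ∈ hittingTimes Φ U V ↔ g ≠ 1 ∧ ∃ x ∈ U, Φ.act g x ∈ V := by
  unfold hittingTimes
  simp only [Set.mem_setOf_eq, and_congr_right_iff]
  intro _
  constructor
  · rintro ⟨x, hxU, v, hvV, rfl⟩
    exact ⟨Φ.act g⁻¹ v, hxU, by rwa [Φ.act_act_inv]⟩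
  · rintro ⟨x, hxU, hV⟩
    exact ⟨x, hxU, Φ.act g x, hV, Φ.act_inv_act g x⟩

lemma mixing_of_subsingleton [Subsingleton X] (Φ : DynAction G X) : IsMixing Φ := by
  intro U V _ _ hUne hVne
  obtain ⟨x, hx⟩ := hUne
  obtain ⟨v, hv⟩ := hVne
  apply Set.Finite.subset (Set.finite_singleton (1 : G))
  intro g hg
  simp only [Set.mem_compl_iff] at hg
  by_contra hg1
  exact hg (mem_hittingTimes_iff.mpr ⟨hg1, x, hx, by rwa [Subsingleton.elim (Φ.act g x) v]⟩)

omit [Group G] in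
/-- Open sets in a subspace of a product over a discrete alphabet contain cylinder
neighborhoods. -/
lemma exists_cylinder_subset {A : Type} [TopologicalSpace A] [DiscreteTopology A]
    {Y : Set (G → A)} {S : Set ↥Y} (hS : IsOpen S) {y : ↥Y} (hy : y ∈ S) :
    ∃ B : Finset G, ∀ z : ↥Y, (∀ b ∈ B, z.1 b = y.1 b) → z ∈ S := by
  obtain ⟨S', hS', rfl⟩ := isOpen_induced_iff.mp hS
  obtain ⟨I, u, hIu, hpi⟩ := isOpen_pi_iff.mp hS' y.1 hy
  refine ⟨I, fun z hz => hpi (Set.mem_pi.mpr fun b hb => ?_)⟩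
  rw [hz b hb]
  exact (hIu b hb).2

end AuxGeneral

/-! ### Backward direction -/

section Backward

variable {G : Type} [Group G]

namespace SubshiftInvSys

variable {Λ : Type} [Preorder Λ] (𝒮 : SubshiftInvSys G Λ)

lemma compactSpace_term (l : Λ) : CompactSpace ↥(𝒮.Y l) :=
  isCompact_iff_compactSpace.mp ((𝒮.subshift l).1.isCompact)

/-- Neighborhood basis of the inverse limit: constraints at a single index. -/
lemma limit_nbhd [Nonempty Λ] (hdir : IsDirected Λ (· ≤ ·))
    {S : Set ↥𝒮.limitSet} (hS : IsOpen S) {y : ↥𝒮.limitSet} (hy : y ∈ S) :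
    ∃ (m : Λ) (W : Set ↥(𝒮.Y m)), IsOpen W ∧ y.1 m ∈ W ∧
      ∀ z : ↥𝒮.limitSet, z.1 m ∈ W → z ∈ S := by
  obtain ⟨S', hS', rfl⟩ := isOpen_induced_iff.mp hS
  obtain ⟨I, u, hIu, hpi⟩ := isOpen_pi_iff.mp hS' y.1 hy
  haveI := hdir
  obtain ⟨m, hm⟩ := I.exists_le
  refine ⟨m, ⋂ (l) (_ : l ∈ I) (h : l ≤ m), 𝒮.bond h ⁻¹' u l, ?_, ?_, ?_⟩
  · refine isOpen_biInter_finset fun l hl => ?_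
    exact isOpen_iInter_of_finite fun h => (𝒮.bond_cont h).isOpen_preimage _ (hIu l hl).1
  · simp only [Set.mem_iInter, Set.mem_preimage]
    intro l hl h
    rw [y.2 l m h]
    exact (hIu l hl).2
  · intro z hz
    refine hpi (Set.mem_pi.mpr fun l hl => ?_)
    simp only [Set.mem_iInter, Set.mem_preimage] at hz
    rw [← z.2 l m (hm l hl)]
    exact hz l hl (hm l hl)

end SubshiftInvSys

end Backward
section Backward2

variable {G : Type} [Group G]

namespace SubshiftInvSys

variable {Λ : Type} [Preorder Λ] (𝒮 : SubshiftInvSys G Λ)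

/-- Lifting points of stabilized ranges to the inverse limit. -/
lemma lift_exists (hdir : IsDirected Λ (· ≤ ·))
    (y₀ : ∀ l, ↥(𝒮.Y l)) (hy₀ : y₀ ∈ 𝒮.limitSet)
    {m m₁ : Λ} (h : m ≤ m₁)
    (hstab : ∀ (n : Λ) (h' : m₁ ≤ n),
      Set.range (𝒮.bond (h.trans h')) = Set.range (𝒮.bond h))
    {u : ↥(𝒮.Y m)} (hu : u ∈ Set.range (𝒮.bond h)) :
    ∃ z ∈ 𝒮.limitSet, z m = u := by
  classical
  haveI := hdir
  haveI : Nonempty Λ := ⟨m⟩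
  haveI : ∀ l, CompactSpace ↥(𝒮.Y l) := fun l => 𝒮.compactSpace_term l
  set C : Finset (Λ × Λ) → Set (∀ l, ↥(𝒮.Y l)) := fun S =>
    {z | z m = u ∧ ∀ p ∈ S, ∀ h' : p.1 ≤ p.2, 𝒮.bond h' (z p.2) = z p.1} with hC
  have hclosed : ∀ S, IsClosed (C S) := by
    intro S
    have : C S = {z | z m = u} ∩
        ⋂ (p ∈ S) (h' : p.1 ≤ p.2), {z : ∀ l, ↥(𝒮.Y l) | 𝒮.bond h' (z p.2) = z p.1} := by
      ext z
      simp [hC, Set.mem_iInter]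
    rw [this]
    refine (isClosed_eq (continuous_apply m) continuous_const).inter ?_
    refine isClosed_biInter fun p _ => isClosed_iInter fun h' =>
      isClosed_eq ((𝒮.bond_cont h').comp (continuous_apply p.2)) (continuous_apply p.1)
  have hnonempty : ∀ S, (C S).Nonempty := by
    intro S
    obtain ⟨lS, hlS⟩ := Finset.exists_le ((S.image Prod.fst ∪ S.image Prod.snd) ∪ {m₁})
    have h1 : m₁ ≤ lS := hlS m₁ (by simp)
    obtain ⟨v, hv⟩ : u ∈ Set.range (𝒮.bond (h.trans h1)) := by
      rw [hstab lS h1]; exact hu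
    refine ⟨fun l => if hl : l ≤ lS then 𝒮.bond hl v else y₀ l, ?_, ?_⟩
    · simp only
      rw [dif_pos (h.trans h1)]
      exact hv
    · intro p hp h'
      have hp1 : p.1 ≤ lS := hlS p.1 (by
        simp only [Finset.mem_union, Finset.mem_image]
        exact Or.inl (Or.inl ⟨p, hp, rfl⟩))
      have hp2 : p.2 ≤ lS := hlS p.2 (by
        simp only [Finset.mem_union, Finset.mem_image]
        exact Or.inl (Or.inr ⟨p, hp, rfl⟩))
      simp only
      rw [dif_pos hp2, dif_pos hp1, 𝒮.bond_comp]
  have hdirC : Directed (· ⊇ ·) C := by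
    intro S S'
    refine ⟨S ∪ S', fun z hz => ⟨hz.1, fun p hp => hz.2 p (Finset.mem_union_left _ hp)⟩,
      fun z hz => ⟨hz.1, fun p hp => hz.2 p (Finset.mem_union_right _ hp)⟩⟩
  obtain ⟨z, hz⟩ := IsCompact.nonempty_iInter_of_directed_nonempty_isCompact_isClosed
    C hdirC hnonempty (fun S => (hclosed S).isCompact) hclosed
  simp only [Set.mem_iInter] at hz
  refine ⟨z, ?_, (hz ∅).1⟩
  intro l m' h''
  exact (hz {(l, m')}).2 (l, m') (Finset.mem_singleton_self _) h''

end SubshiftInvSys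

/-- The backward implication. -/
lemma isMixing_of_pkg {X : Type} [TopologicalSpace X] (Φ : DynAction G X)
    (P : SubshiftInvSysPkg G) (hML : P.sys.ML)
    (hmix : ∀ l : P.Idx, IsMixing (P.sys.termDyn l))
    (f : ↥P.sys.limitSet → X) (hf : IsFactorMap P.sys.limitDyn Φ f) :
    IsMixing Φ := by
  obtain ⟨hfc, hfs, hfe⟩ := hf
  rcases isEmpty_or_nonempty P.Idx with hE | hNE
  · haveI : Subsingleton ↥P.sys.limitSet :=
      ⟨fun a b => Subtype.ext (funext fun l => isEmptyElim l)⟩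
    haveI : Subsingleton X := hfs.subsingleton
    exact mixing_of_subsingleton Φ
  · intro U V hU hV hUne hVne
    obtain ⟨x, hx⟩ := hUne
    obtain ⟨y, rfl⟩ := hfs x
    obtain ⟨x', hx'⟩ := hVne
    obtain ⟨y', rfl⟩ := hfs x'
    obtain ⟨m₀, W₁, hW₁, hyW₁, push₁⟩ :=
      P.sys.limit_nbhd P.directed (hU.preimage hfc) (Set.mem_preimage.mpr hx)
    obtain ⟨m₀', W₂, hW₂, hyW₂, push₂⟩ :=
      P.sys.limit_nbhd P.directed (hV.preimage hfc) (Set.mem_preimage.mpr hx')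
    obtain ⟨m, hm₀, hm₀'⟩ := P.directed.directed m₀ m₀'
    -- pull constraints to level m
    set W1 : Set ↥(P.sys.Y m) := P.sys.bond hm₀ ⁻¹' W₁ with hW1def
    set W2 : Set ↥(P.sys.Y m) := P.sys.bond hm₀' ⁻¹' W₂ with hW2def
    obtain ⟨m₁, h, hstab⟩ := hML m
    set W1' : Set ↥(P.sys.Y m₁) := P.sys.bond h ⁻¹' W1 with hW1'def
    set W2' : Set ↥(P.sys.Y m₁) := P.sys.bond h ⁻¹' W2 with hW2'def
    have hW1'open : IsOpen W1' := (hW₁.preimage (P.sys.bond_cont hm₀)).preimage (P.sys.bond_cont h)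
    have hW2'open : IsOpen W2' := (hW₂.preimage (P.sys.bond_cont hm₀')).preimage (P.sys.bond_cont h)
    have hyW1' : y.1 m₁ ∈ W1' := by
      simp only [hW1'def, hW1def, Set.mem_preimage]
      rw [P.sys.bond_comp, y.2 m₀ m₁ (hm₀.trans h)]
      exact hyW₁
    have hyW2' : y'.1 m₁ ∈ W2' := by
      simp only [hW2'def, hW2def, Set.mem_preimage]
      rw [P.sys.bond_comp, y'.2 m₀' m₁ (hm₀'.trans h)]
      exact hyW₂
    have hfin := hmix m₁ W1' W2' hW1'open hW2'open ⟨_, hyW1'⟩ ⟨_, hyW2'⟩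
    apply hfin.subset
    intro g hg
    simp only [Set.mem_compl_iff] at hg ⊢
    intro hghit
    apply hg
    obtain ⟨hg1, v₁, hv₁, hgv₁⟩ := mem_hittingTimes_iff.mp hghit
    -- lift u := bond h v₁ to the limit
    obtain ⟨z, hzlim, hzm⟩ := P.sys.lift_exists P.directed y.1 y.2 h hstab
      (u := P.sys.bond h v₁) ⟨v₁, rfl⟩
    refine mem_hittingTimes_iff.mpr ⟨hg1, f ⟨z, hzlim⟩, ?_, ?_⟩
    · apply push₁
      show z m₀ ∈ W₁
      rw [← hzlim m₀ m hm₀, hzm]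
      exact hv₁
    · rw [← hfe g ⟨z, hzlim⟩]
      apply push₂
      have hzg := (P.sys.limitDyn.act g ⟨z, hzlim⟩).2
      show (P.sys.limitDyn.act g ⟨z, hzlim⟩).1 m₀' ∈ W₂
      rw [← hzg m₀' m hm₀']
      show P.sys.bond hm₀'
        ((subshiftDyn (P.sys.Y m) (P.sys.subshift m)).act g (z m)) ∈ W₂
      rw [hzm, P.sys.bond_equivariant h g v₁]
      exact hgv₁
  
end Backward2
/-! ### Forward direction: the symbolic cover construction -/

section Forward

variable (X : Type) [MetricSpace X] [CompactSpace X]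

lemma exists_finite_ball_cover (j : ℕ) :
    ∃ (N : ℕ) (c : Fin N → X), ∀ x : X, ∃ i, dist x (c i) < (1/2 : ℝ) ^ j := by
  obtain ⟨t, ht⟩ := IsCompact.elim_finite_subcover (isCompact_univ (X := X))
    (fun x : X => Metric.ball x ((1/2 : ℝ) ^ j)) (fun x => Metric.isOpen_ball)
    (fun x _ => Set.mem_iUnion.mpr ⟨x, Metric.mem_ball_self (by positivity)⟩)
  refine ⟨t.card, fun i => (t.equivFin.symm i : X), fun x => ?_⟩
  have hx := ht (Set.mem_univ x)
  simp only [Set.mem_iUnion] at hx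
  obtain ⟨p, hp, hxp⟩ := hx
  refine ⟨t.equivFin ⟨p, hp⟩, ?_⟩
  show dist x ((t.equivFin.symm (t.equivFin ⟨p, hp⟩) : ↥t) : X) < (1/2 : ℝ) ^ j
  rw [Equiv.symm_apply_apply]
  exact Metric.mem_ball.mp hxp

noncomputable def covN (j : ℕ) : ℕ := (exists_finite_ball_cover X j).choose

noncomputable def covC (j : ℕ) : Fin (covN X j) → X :=
  (exists_finite_ball_cover X j).choose_spec.choose

lemma covC_spec (j : ℕ) (x : X) : ∃ i, dist x (covC X j i) < (1/2 : ℝ) ^ j :=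
  (exists_finite_ball_cover X j).choose_spec.choose_spec x

/-- The chosen index of a ball containing `x'`. -/
noncomputable def pick (j : ℕ) (x' : X) : Fin (covN X j) := (covC_spec X j x').choose

lemma pick_spec (j : ℕ) (x' : X) :
    x' ∈ Metric.ball (covC X j (pick X j x')) ((1/2 : ℝ) ^ j) :=
  Metric.mem_ball.mpr (covC_spec X j x').choose_spec

/-- The alphabet at level `n`: chains of ball indices at scales `0, …, n`. -/
abbrev Adyn (n : ℕ) : Type := (j : Fin (n + 1)) → Fin (covN X j.1)

noncomputable example (n : ℕ) : TopologicalSpace (Adyn X n) := inferInstance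
example (n : ℕ) : DiscreteTopology (Adyn X n) := inferInstance
example (n : ℕ) : Finite (Adyn X n) := inferInstance

variable {G : Type} [Group G] (Φ : DynAction G X)

/-- The level-`n` subshift: admissible chains of itineraries. -/
def Ydyn (n : ℕ) : Set (G → Adyn X n) :=
  {w | ∀ F : Finset G, ∃ x : X, ∀ g ∈ F, ∀ j : Fin (n + 1),
    Φ.act g x ∈ Metric.ball (covC X j.1 (w g j)) ((1/2 : ℝ) ^ (j.1))}

lemma Ydyn_isClosed (n : ℕ) : IsClosed (Ydyn X Φ n) := by
  have heq : Ydyn X Φ n = ⋂ F : Finset G,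
      (fun (w : G → Adyn X n) (g : ↥F) => w g.1) ⁻¹'
        {u : ↥F → Adyn X n | ∃ x : X, ∀ g : ↥F, ∀ j : Fin (n + 1),
          Φ.act g.1 x ∈ Metric.ball (covC X j.1 (u g j)) ((1/2 : ℝ) ^ (j.1))} := by
    ext w
    simp only [Ydyn, Set.mem_setOf_eq, Set.mem_iInter, Set.mem_preimage]
    constructor
    · intro hw F
      obtain ⟨x, hx⟩ := hw F
      exact ⟨x, fun g j => hx g.1 g.2 j⟩
    · intro hw F
      obtain ⟨x, hx⟩ := hw F
      exact ⟨x, fun g hg j => hx ⟨g, hg⟩ j⟩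
  rw [heq]
  exact isClosed_iInter fun F => IsClosed.preimage
    (continuous_pi fun g => continuous_apply g.1) (isClosed_discrete _)

lemma Ydyn_subshift (n : ℕ) : IsSubshift (Ydyn X Φ n) := by
  classical
  refine ⟨Ydyn_isClosed X Φ n, fun g w hw F => ?_⟩
  obtain ⟨x, hx⟩ := hw (F.image (· * g))
  refine ⟨Φ.act g x, fun h hh j => ?_⟩
  have h1 := hx (h * g) (Finset.mem_image_of_mem _ hh) j
  show Φ.act h (Φ.act g x) ∈ Metric.ball (covC X j.1 (w (h * g) j)) ((1/2 : ℝ) ^ (j.1))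
  rwa [Φ.act_act]

/-- Bonding maps: truncation of chains. -/
noncomputable def bondFun {n m : ℕ} (h : n ≤ m) (w : ↥(Ydyn X Φ m)) : ↥(Ydyn X Φ n) :=
  ⟨fun g j => w.1 g ⟨j.1, lt_of_lt_of_le j.2 (Nat.succ_le_succ h)⟩, by
    intro F
    obtain ⟨x, hx⟩ := w.2 F
    exact ⟨x, fun g hg j => hx g hg ⟨j.1, lt_of_lt_of_le j.2 (Nat.succ_le_succ h)⟩⟩⟩

lemma bondFun_continuous {n m : ℕ} (h : n ≤ m) : Continuous (bondFun X Φ h) := by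
  refine Continuous.subtype_mk (continuous_pi fun g => continuous_pi fun j => ?_) _
  exact (continuous_apply _).comp ((continuous_apply g).comp continuous_subtype_val)

end Forward
section Forward2

variable (X : Type) [MetricSpace X] [CompactSpace X]
variable {G : Type} [Group G] (Φ : DynAction G X)

lemma Ydyn_mixing (hΦ : IsMixing Φ) (n : ℕ) :
    IsMixing (subshiftDyn (Ydyn X Φ n) (Ydyn_subshift X Φ n)) := by
  classical
  rintro U V hU hV ⟨y, hy⟩ ⟨y', hy'⟩
  obtain ⟨B, hB⟩ := exists_cylinder_subset hU hy
  obtain ⟨B', hB'⟩ := exists_cylinder_subset hV hy'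
  set VP : Set X := ⋂ (b ∈ B) (j : Fin (n + 1)),
    Φ.act b ⁻¹' Metric.ball (covC X j.1 (y.1 b j)) ((1/2 : ℝ) ^ (j.1)) with hVPdef
  set VQ : Set X := ⋂ (b ∈ B') (j : Fin (n + 1)),
    Φ.act b ⁻¹' Metric.ball (covC X j.1 (y'.1 b j)) ((1/2 : ℝ) ^ (j.1)) with hVQdef
  have hVPopen : IsOpen VP := isOpen_biInter_finset fun b _ =>
    isOpen_iInter_of_finite fun j => Metric.isOpen_ball.preimage (Φ.continuous_act b)
  have hVQopen : IsOpen VQ := isOpen_biInter_finset fun b _ =>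
    isOpen_iInter_of_finite fun j => Metric.isOpen_ball.preimage (Φ.continuous_act b)
  have hVPne : VP.Nonempty := by
    obtain ⟨x, hx⟩ := y.2 B
    exact ⟨x, Set.mem_iInter₂.mpr fun b hb => Set.mem_iInter.mpr fun j => hx b hb j⟩
  have hVQne : VQ.Nonempty := by
    obtain ⟨x, hx⟩ := y'.2 B'
    exact ⟨x, Set.mem_iInter₂.mpr fun b hb => Set.mem_iInter.mpr fun j => hx b hb j⟩
  have hfin := hΦ VP VQ hVPopen hVQopen hVPne hVQne
  set T : Finset G := (B' ×ˢ B).image (fun p => p.1⁻¹ * p.2) with hTdef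
  have key : ∀ g : G, g ∈ hittingTimes Φ VP VQ → g ∉ T →
      g ∈ hittingTimes (subshiftDyn (Ydyn X Φ n) (Ydyn_subshift X Φ n)) U V := by
    intro g hghit hgT
    obtain ⟨hg1, x, hxP, hgxQ⟩ := mem_hittingTimes_iff.mp hghit
    have hxP' : ∀ b ∈ B, ∀ j : Fin (n + 1),
        Φ.act b x ∈ Metric.ball (covC X j.1 (y.1 b j)) ((1/2 : ℝ) ^ (j.1)) := by
      intro b hb j
      have := Set.mem_iInter.mp (Set.mem_iInter₂.mp hxP b hb) j
      exact this
    have hgxQ' : ∀ b ∈ B', ∀ j : Fin (n + 1),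
        Φ.act b (Φ.act g x) ∈ Metric.ball (covC X j.1 (y'.1 b j)) ((1/2 : ℝ) ^ (j.1)) := by
      intro b hb j
      have := Set.mem_iInter.mp (Set.mem_iInter₂.mp hgxQ b hb) j
      exact this
    set z : G → Adyn X n := fun h =>
      if h ∈ B then y.1 h
      else if h * g⁻¹ ∈ B' then y'.1 (h * g⁻¹)
      else fun j => pick X j.1 (Φ.act h x) with hzdef
    have hzx : ∀ h : G, ∀ j : Fin (n + 1),
        Φ.act h x ∈ Metric.ball (covC X j.1 (z h j)) ((1/2 : ℝ) ^ (j.1)) := by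
      intro h j
      by_cases hb : h ∈ B
      · simp only [hzdef, if_pos hb]
        exact hxP' h hb j
      · by_cases hb' : h * g⁻¹ ∈ B'
        · simp only [hzdef, if_neg hb, if_pos hb']
          have := hgxQ' (h * g⁻¹) hb' j
          rwa [Φ.act_act, inv_mul_cancel_right] at this
        · simp only [hzdef, if_neg hb, if_neg hb']
          exact pick_spec X j.1 (Φ.act h x)
    have hzY : z ∈ Ydyn X Φ n := fun F => ⟨x, fun h _ j => hzx h j⟩
    refine mem_hittingTimes_iff.mpr ⟨hg1, ⟨z, hzY⟩, ?_, ?_⟩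
    · apply hB
      intro b hb
      simp only [hzdef, if_pos hb]
    · apply hB'
      intro b' hb'
      show z (b' * g) = y'.1 b'
      have hbg : b' * g ∉ B := by
        intro hmem
        exact hgT (Finset.mem_image.mpr ⟨(b', b' * g), Finset.mem_product.mpr ⟨hb', hmem⟩,
          by rw [inv_mul_cancel_left]⟩)
      simp only [hzdef, if_neg hbg, if_pos (show b' * g * g⁻¹ ∈ B' by rwa [mul_inv_cancel_right])]
      rw [mul_inv_cancel_right]
  refine Set.Finite.subset (hfin.union T.finite_toSet) ?_
  intro g hg
  by_cases hT : g ∈ (T : Set G)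
  · exact Set.mem_union_right _ hT
  · refine Set.mem_union_left _ ?_
    intro hghit
    exact hg (key g hghit hT)

lemma bondFun_surjective {n m : ℕ} (h : n ≤ m) : Function.Surjective (bondFun X Φ h) := by
  classical
  intro y
  set C : Finset G → Set (G → Adyn X m) := fun F =>
    {w | (∀ (g : G) (j : Fin (n + 1)), w g ⟨j.1, lt_of_lt_of_le j.2 (Nat.succ_le_succ h)⟩ = y.1 g j) ∧
      ∃ x : X, ∀ g ∈ F, ∀ j : Fin (m + 1),
        Φ.act g x ∈ Metric.ball (covC X j.1 (w g j)) ((1/2 : ℝ) ^ (j.1))} with hCdef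
  have hclosed : ∀ F, IsClosed (C F) := by
    intro F
    have heq : C F = (⋂ (g : G) (j : Fin (n + 1)),
        {w : G → Adyn X m | w g ⟨j.1, lt_of_lt_of_le j.2 (Nat.succ_le_succ h)⟩ = y.1 g j}) ∩
        ((fun (w : G → Adyn X m) (g : ↥F) => w g.1) ⁻¹'
          {u : ↥F → Adyn X m | ∃ x : X, ∀ g : ↥F, ∀ j : Fin (m + 1),
            Φ.act g.1 x ∈ Metric.ball (covC X j.1 (u g j)) ((1/2 : ℝ) ^ (j.1))}) := by
      ext w
      simp only [hCdef, Set.mem_setOf_eq, Set.mem_inter_iff, Set.mem_iInter, Set.mem_preimage]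
      constructor
      · rintro ⟨h1, x, h2⟩
        exact ⟨h1, x, fun g j => h2 g.1 g.2 j⟩
      · rintro ⟨h1, x, h2⟩
        exact ⟨h1, x, fun g hg j => h2 ⟨g, hg⟩ j⟩
    rw [heq]
    refine IsClosed.inter (isClosed_iInter fun g => isClosed_iInter fun j =>
      isClosed_eq (Continuous.comp
        (continuous_apply (⟨j.1, lt_of_lt_of_le j.2 (Nat.succ_le_succ h)⟩ : Fin (m + 1)) :
          Continuous fun a : Adyn X m => a ⟨j.1, lt_of_lt_of_le j.2 (Nat.succ_le_succ h)⟩)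
        (continuous_apply g)) continuous_const) ?_
    exact IsClosed.preimage (continuous_pi fun g => continuous_apply g.1) (isClosed_discrete _)
  have hne : ∀ F, (C F).Nonempty := by
    intro F
    obtain ⟨x, hx⟩ := y.2 F
    refine ⟨fun g j => if hj : j.1 < n + 1 then y.1 g ⟨j.1, hj⟩ else pick X j.1 (Φ.act g x),
      ?_, x, ?_⟩
    · intro g j
      show (if hj : (j : ℕ) < n + 1 then y.1 g ⟨j, hj⟩ else pick X j (Φ.act g x)) = y.1 g j
      rw [dif_pos j.2]
    · intro g hg j
      show Φ.act g x ∈ Metric.ball (covC X j.1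
        (if hj : (j : ℕ) < n + 1 then y.1 g ⟨j, hj⟩ else pick X j (Φ.act g x))) ((1/2 : ℝ) ^ (j.1))
      by_cases hj : j.1 < n + 1
      · rw [dif_pos hj]
        exact hx g hg ⟨j.1, hj⟩
      · rw [dif_neg hj]
        exact pick_spec X j.1 (Φ.act g x)
  have hdirC : Directed (· ⊇ ·) C := by
    intro F F'
    refine ⟨F ∪ F', fun w hw => ⟨hw.1, ?_⟩, fun w hw => ⟨hw.1, ?_⟩⟩
    · obtain ⟨x, hx⟩ := hw.2
      exact ⟨x, fun g hg j => hx g (Finset.mem_union_left _ hg) j⟩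
    · obtain ⟨x, hx⟩ := hw.2
      exact ⟨x, fun g hg j => hx g (Finset.mem_union_right _ hg) j⟩
  obtain ⟨w, hw⟩ := IsCompact.nonempty_iInter_of_directed_nonempty_isCompact_isClosed
    C hdirC hne (fun F => (hclosed F).isCompact) hclosed
  simp only [Set.mem_iInter] at hw
  have hwY : w ∈ Ydyn X Φ m := fun F => (hw F).2
  refine ⟨⟨w, hwY⟩, Subtype.ext (funext fun g => funext fun j => ?_)⟩
  exact (hw ∅).1 g j

end Forward2
section Forward3

variable (X : Type) [MetricSpace X] [CompactSpace X]
variable {G : Type} [Group G] (Φ : DynAction G X)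

/-- The full inverse system built from `Φ`. -/
noncomputable def dynSys : SubshiftInvSys G ℕ where
  A := Adyn X
  topoA := fun _ => inferInstance
  discA := fun _ => inferInstance
  finA := fun _ => inferInstance
  Y := Ydyn X Φ
  subshift := Ydyn_subshift X Φ
  bond := fun h => bondFun X Φ h
  bond_cont := fun h => bondFun_continuous X Φ h
  bond_refl := fun l x => Subtype.ext (funext fun g => funext fun j => rfl)
  bond_comp := fun h1 h2 x => Subtype.ext (funext fun g => funext fun j => rfl)
  bond_equivariant := fun h g x => Subtype.ext (funext fun a => funext fun j => rfl)

/-- The induced itinerary at every scale. -/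
noncomputable def ZZ (y : ↥((dynSys X Φ).limitSet)) (g : G) (j : ℕ) : Fin (covN X j) :=
  (y.1 j).1 g ⟨j, Nat.lt_succ_self j⟩

lemma ZZ_eq (y : ↥((dynSys X Φ).limitSet)) (nn : ℕ) (g : G) (j : Fin (nn + 1)) :
    (y.1 nn).1 g j = ZZ X Φ y g j.1 := by
  have hj : (j : ℕ) ≤ nn := Nat.lt_succ_iff.mp j.2
  have hcmp := congrFun (congrFun (congrArg Subtype.val (y.2 j.1 nn hj)) g)
    ⟨j.1, Nat.lt_succ_self j.1⟩
  have : (y.1 nn).1 g ⟨j.1, lt_of_lt_of_le (Nat.lt_succ_self j.1) (Nat.succ_le_succ hj)⟩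
      = ZZ X Φ y g j.1 := hcmp
  rw [show j = (⟨j.1, lt_of_lt_of_le (Nat.lt_succ_self j.1) (Nat.succ_le_succ hj)⟩ : Fin (nn+1))
    from Fin.ext rfl]
  exact this

lemma dist_le_two_of_mem_closure_ball {a b c : X} {r : ℝ}
    (ha : a ∈ closure (Metric.ball c r)) (hb : b ∈ closure (Metric.ball c r)) :
    dist a b ≤ 2 * r := by
  have ha' := Metric.closure_ball_subset_closedBall ha
  have hb' := Metric.closure_ball_subset_closedBall hb
  calc dist a b ≤ dist a c + dist c b := dist_triangle a c b
  _ ≤ r + r := add_le_add (Metric.mem_closedBall.mp ha')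
      (by rw [dist_comm]; exact Metric.mem_closedBall.mp hb')
  _ = 2 * r := by ring

lemma eq_of_dist_le_pow {x x' : X} (hd : ∀ j : ℕ, dist x x' ≤ 2 * (1/2 : ℝ) ^ j) :
    x = x' := by
  have h0 : Filter.Tendsto (fun j : ℕ => 2 * (1/2 : ℝ) ^ j) Filter.atTop (nhds 0) := by
    have := (tendsto_pow_atTop_nhds_zero_of_lt_one (by norm_num : (0:ℝ) ≤ 1/2)
      (by norm_num : (1/2 : ℝ) < 1)).const_mul 2
    simpa using this
  have : dist x x' ≤ 0 := ge_of_tendsto' h0 hd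
  exact dist_le_zero.mp this

variable [Countable G]

lemma exists_factor_point (y : ↥((dynSys X Φ).limitSet)) :
    ∃ x : X, ∀ (g : G) (j : ℕ),
      Φ.act g x ∈ closure (Metric.ball (covC X j (ZZ X Φ y g j)) ((1/2 : ℝ) ^ j)) := by
  classical
  obtain ⟨e, he⟩ := exists_surjective_nat G
  set K : ℕ → Set X := fun nn => {x | ∀ i ≤ nn, ∀ j ≤ nn,
    Φ.act (e i) x ∈ closure (Metric.ball (covC X j (ZZ X Φ y (e i) j)) ((1/2 : ℝ) ^ j))}
    with hKdef
  have hclosed : ∀ nn, IsClosed (K nn) := by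
    intro nn
    have : K nn = ⋂ (i : ℕ) (_ : i ≤ nn) (j : ℕ) (_ : j ≤ nn),
        Φ.act (e i) ⁻¹' closure (Metric.ball (covC X j (ZZ X Φ y (e i) j)) ((1/2 : ℝ) ^ j)) := by
      ext x
      simp [hKdef, Set.mem_iInter]
    rw [this]
    exact isClosed_iInter fun i => isClosed_iInter fun _ => isClosed_iInter fun j =>
      isClosed_iInter fun _ => isClosed_closure.preimage (Φ.continuous_act (e i))
  have hne : ∀ nn, (K nn).Nonempty := by
    intro nn
    obtain ⟨x, hx⟩ := (y.1 nn).2 ((Finset.range (nn + 1)).image e)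
    refine ⟨x, fun i hi j hj => ?_⟩
    have hmem : e i ∈ (Finset.range (nn + 1)).image e :=
      Finset.mem_image_of_mem e (Finset.mem_range.mpr (Nat.lt_succ_of_le hi))
    have := hx (e i) hmem ⟨j, Nat.lt_succ_of_le hj⟩
    rw [ZZ_eq X Φ y nn (e i) ⟨j, Nat.lt_succ_of_le hj⟩] at this
    exact subset_closure this
  have hdirK : Directed (· ⊇ ·) K := by
    intro a b
    refine ⟨max a b, fun x hx i hi j hj => hx i (hi.trans (le_max_left a b)) j
      (hj.trans (le_max_left a b)), fun x hx i hi j hj => hx i (hi.trans (le_max_right a b)) j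
      (hj.trans (le_max_right a b))⟩
  obtain ⟨x, hx⟩ := IsCompact.nonempty_iInter_of_directed_nonempty_isCompact_isClosed
    K hdirK hne (fun nn => (hclosed nn).isCompact) hclosed
  simp only [Set.mem_iInter] at hx
  refine ⟨x, fun g j => ?_⟩
  obtain ⟨i, rfl⟩ := he g
  exact hx (max i j) i (le_max_left i j) j (le_max_right i j)

/-- The factor map. -/
noncomputable def fmap (y : ↥((dynSys X Φ).limitSet)) : X :=
  (exists_factor_point X Φ y).choose

lemma fmap_spec (y : ↥((dynSys X Φ).limitSet)) (g : G) (j : ℕ) :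
    Φ.act g (fmap X Φ y) ∈
      closure (Metric.ball (covC X j (ZZ X Φ y g j)) ((1/2 : ℝ) ^ j)) :=
  (exists_factor_point X Φ y).choose_spec g j

lemma fmap_unique (y : ↥((dynSys X Φ).limitSet)) (x : X)
    (hx : ∀ (g : G) (j : ℕ),
      Φ.act g x ∈ closure (Metric.ball (covC X j (ZZ X Φ y g j)) ((1/2 : ℝ) ^ j))) :
    fmap X Φ y = x := by
  refine eq_of_dist_le_pow X fun j => ?_
  have h1 := fmap_spec X Φ y 1 j
  have h2 := hx 1 j
  rw [Φ.act_one] at h1 h2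
  exact dist_le_two_of_mem_closure_ball X h1 h2

lemma fmap_continuous : Continuous (fmap X Φ) := by
  rw [continuous_iff_continuousAt]
  intro y
  rw [ContinuousAt, Metric.tendsto_nhds]
  intro ε hε
  have h0 : Filter.Tendsto (fun j : ℕ => 2 * (1/2 : ℝ) ^ j) Filter.atTop (nhds 0) := by
    have := (tendsto_pow_atTop_nhds_zero_of_lt_one (by norm_num : (0:ℝ) ≤ 1/2)
      (by norm_num : (1/2 : ℝ) < 1)).const_mul 2
    simpa using this
  obtain ⟨j, hj⟩ := (h0.eventually (gt_mem_nhds hε)).exists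
  have hOopen : IsOpen {y' : ↥((dynSys X Φ).limitSet) | ZZ X Φ y' 1 j = ZZ X Φ y 1 j} := by
    have hc : Continuous (fun y' : ↥((dynSys X Φ).limitSet) => ZZ X Φ y' 1 j) := by
      exact (continuous_apply (⟨j, Nat.lt_succ_self j⟩ : Fin (j + 1))).comp
        ((continuous_apply (1 : G)).comp (continuous_subtype_val.comp
          ((continuous_apply j).comp continuous_subtype_val)))
    exact (isOpen_discrete {ZZ X Φ y 1 j}).preimage hc
  filter_upwards [hOopen.mem_nhds rfl] with y' hy'
  have h1 := fmap_spec X Φ y' 1 j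
  have h2 := fmap_spec X Φ y 1 j
  rw [Φ.act_one] at h1 h2
  rw [hy'] at h1
  exact lt_of_le_of_lt (dist_le_two_of_mem_closure_ball X h1 h2) hj

lemma fmap_equivariant : IsEquivariant (dynSys X Φ).limitDyn Φ (fmap X Φ) := by
  intro g y
  refine fmap_unique X Φ _ _ fun h j => ?_
  have hZ : ZZ X Φ ((dynSys X Φ).limitDyn.act g y) h j = ZZ X Φ y (h * g) j := rfl
  rw [hZ, Φ.act_act]
  exact fmap_spec X Φ y (h * g) j

lemma fmap_surjective : Function.Surjective (fmap X Φ) := by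
  intro x
  have hwY : ∀ nn : ℕ, (fun (g : G) (j : Fin (nn + 1)) => pick X j.1 (Φ.act g x)) ∈
      Ydyn X Φ nn := fun nn F => ⟨x, fun g _ j => pick_spec X j.1 (Φ.act g x)⟩
  have hlim : (fun nn => (⟨fun g j => pick X j.1 (Φ.act g x), hwY nn⟩ : ↥(Ydyn X Φ nn))) ∈
      (dynSys X Φ).limitSet := by
    intro l m h
    exact Subtype.ext (funext fun g => funext fun j => rfl)
  refine ⟨⟨_, hlim⟩, ?_⟩
  refine fmap_unique X Φ _ _ fun g j => ?_
  exact subset_closure (pick_spec X j (Φ.act g x))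

lemma dynSys_ML : (dynSys X Φ).ML := by
  intro l
  refine ⟨l, le_refl l, fun nn h' => ?_⟩
  show Set.range (bondFun X Φ ((le_refl l).trans h')) = Set.range (bondFun X Φ (le_refl l))
  rw [Set.range_eq_univ.mpr (bondFun_surjective X Φ ((le_refl l).trans h')),
    Set.range_eq_univ.mpr (bondFun_surjective X Φ (le_refl l))]

lemma dynSys_term_mixing (hΦ : IsMixing Φ) (l : ℕ) : IsMixing ((dynSys X Φ).termDyn l) :=
  Ydyn_mixing X Φ hΦ l

end Forward3
/-- **Theorem 1.5 (mixing case).** For a compact metric space, `Φ` is mixing iff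
`(X,G,Φ)` is a factor of the inverse limit of an ML inverse system of mixing subshifts. -/
theorem mixing_iff_factor_invlim_mixing_subshifts
    {G X : Type} [Group G] [Countable G] [MetricSpace X] [CompactSpace X]
    (Φ : DynAction G X) :
    IsMixing Φ ↔
      ∃ P : SubshiftInvSysPkg G,
        P.sys.ML ∧
        (∀ l : P.Idx, IsMixing (P.sys.termDyn l)) ∧
        ∃ f : ↥P.sys.limitSet → X, IsFactorMap P.sys.limitDyn Φ f := by
  constructor
  · intro hΦ
    exact ⟨{ Idx := ℕ, directed := inferInstance, sys := dynSys X Φ }, dynSys_ML X Φ,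
      fun l => dynSys_term_mixing X Φ hΦ l, fmap X Φ,
      fmap_continuous X Φ, fmap_surjective X Φ, fmap_equivariant X Φ⟩
  · rintro ⟨P, hML, hmix, f, hf⟩
    exact isMixing_of_pkg Φ P hML hmix f hf
end

section
/- Let (X, G, Φ) be a dynamical system where X is a compact metric space, and let S be a subset of G. Then Φ has the metric S-shadowing property if and only if for every finite open cover 𝒰 of X there exists a finite open cover 𝒱 of X such that every (S, 𝒱)-pseudo-orbit is 𝒰-shadowed by some point of X. -/
open Set

universe u

/-! ### Metric shadowing -/

/-- `{x g}` is an `(S,δ)`-pseudo-orbit for the metric `d`. -/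
def IsMetricPseudoOrbit {G X : Type u} [Group G] [MetricSpace X]
    (Φ : DynAction G X) (S : Set G) (δ : ℝ) (x : G → X) : Prop :=
  ∀ g : G, ∀ s ∈ S, dist (Φ.act s (x g)) (x (s * g)) < δ

/-- The metric `S`-shadowing property. -/
def MetricShadowing {G X : Type u} [Group G] [MetricSpace X]
    (Φ : DynAction G X) (S : Set G) : Prop :=
  ∀ ε : ℝ, 0 < ε → ∃ δ : ℝ, 0 < δ ∧ ∀ x : G → X,
    IsMetricPseudoOrbit Φ S δ x → ∃ z : X, ∀ g : G, dist (Φ.act g z) (x g) < ε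

open Metric in
lemma exists_ball_cover {X : Type} [MetricSpace X] [CompactSpace X] {ε : ℝ} (hε : 0 < ε) :
    ∃ 𝒰 : Finset (Set X), IsFOC 𝒰 ∧ ∀ U ∈ 𝒰, ∀ a ∈ U, ∀ b ∈ U, dist a b < ε := by
  classical
  obtain ⟨t, ht⟩ := isCompact_univ.elim_finite_subcover (fun x : X => ball x (ε / 3))
    (fun x => isOpen_ball) (fun x _ => Set.mem_iUnion.2 ⟨x, mem_ball_self (by linarith)⟩)
  refine ⟨t.image (fun x => ball x (ε / 3)), ⟨?_, ?_⟩, ?_⟩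
  · intro U hU
    obtain ⟨x, -, rfl⟩ := Finset.mem_image.1 hU
    exact isOpen_ball
  · apply Set.eq_univ_of_univ_subset
    intro y hy
    obtain ⟨x, hx, hyx⟩ := Set.mem_iUnion₂.1 (ht hy)
    exact ⟨ball x (ε / 3), Finset.mem_coe.2 (Finset.mem_image_of_mem _ hx), hyx⟩
  · intro U hU a ha b hb
    obtain ⟨x, -, rfl⟩ := Finset.mem_image.1 hU
    calc dist a b ≤ dist a x + dist x b := dist_triangle a x b
    _ < ε / 3 + ε / 3 := add_lt_add (mem_ball.1 ha) (by rw [dist_comm]; exact mem_ball.1 hb)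
    _ < ε := by linarith

theorem metric_shadowing_iff_cover_shadowing'
    {G X : Type} [Group G] [Countable G] [MetricSpace X] [CompactSpace X]
    (Φ : DynAction G X) (S : Set G) :
    MetricShadowing Φ S ↔ ShadowingProperty Φ S := by
  constructor
  · intro hM 𝒰 h𝒰
    obtain ⟨ε, hε, hleb⟩ := lebesgue_number_lemma_of_metric_sUnion isCompact_univ h𝒰.1
      (h𝒰.2 ▸ Set.Subset.rfl)
    obtain ⟨δ, hδ, hshad⟩ := hM ε hε
    obtain ⟨𝒱, h𝒱, hdiam⟩ := exists_ball_cover (X := X) hδ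
    refine ⟨𝒱, h𝒱, fun x hx => ?_⟩
    obtain ⟨U, hU, hpat⟩ := hx
    have hmpo : IsMetricPseudoOrbit Φ S δ x := fun g s hs => by
      obtain ⟨h1, h2⟩ := hpat g s hs
      exact hdiam _ (hU (s * g)) _ h2 _ h1
    obtain ⟨z, hz⟩ := hshad x hmpo
    refine ⟨z, fun g => ?_⟩
    obtain ⟨W, hW, hball⟩ := hleb (Φ.act g z) (Set.mem_univ _)
    exact ⟨W, hW, hball (Metric.mem_ball_self hε), hball (Metric.mem_ball'.2 (hz g))⟩
  · intro hT ε hε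
    obtain ⟨𝒰, h𝒰, hdiam⟩ := exists_ball_cover (X := X) hε
    obtain ⟨𝒱, h𝒱, hshad⟩ := hT 𝒰 h𝒰
    obtain ⟨δ, hδ, hleb⟩ := lebesgue_number_lemma_of_metric_sUnion isCompact_univ h𝒱.1
      (h𝒱.2 ▸ Set.Subset.rfl)
    refine ⟨δ, hδ, fun x hx => ?_⟩
    choose V hVmem hVball using fun g => hleb (x g) (Set.mem_univ _)
    have : IsPseudoOrbit Φ S 𝒱 x := by
      refine ⟨V, fun g => hVmem g, fun g s hs => ?_⟩
      exact ⟨hVball (s * g) (Metric.mem_ball_self hδ),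
        hVball (s * g) (Metric.mem_ball.2 (hx g s hs))⟩
    obtain ⟨z, hz⟩ := hshad x this
    refine ⟨z, fun g => ?_⟩
    obtain ⟨U, hU, hz1, hz2⟩ := hz g
    exact hdiam U hU _ hz1 _ hz2

/-- **Lemma 3.3.** For a compact metric space, the metric `S`-shadowing property is
equivalent to the topological (finite-open-cover) `S`-shadowing property. -/
theorem metric_shadowing_iff_cover_shadowing
    {G X : Type} [Group G] [Countable G] [MetricSpace X] [CompactSpace X]
    (Φ : DynAction G X) (S : Set G) :
    MetricShadowing Φ S ↔ ShadowingProperty Φ S :=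
  metric_shadowing_iff_cover_shadowing' Φ S
end

section
/- Let (X, G, Φ) be a dynamical system where X is a compact totally disconnected Hausdorff space, and let S be a finite subset of G. For 𝒰, 𝒱 ∈ Part(X) with 𝒱 ≻ 𝒰 and the induced map ι : 𝒱^G → 𝒰^G: (i) ι ∘ σ_g = σ_g ∘ ι for every g ∈ G; (ii) ι(𝒪(𝒱)) = 𝒪(𝒰); and (iii) 𝒪(𝒰) ⊆ ι(𝒫𝒪_S(𝒱)) ⊆ 𝒫𝒪_S(𝒰). -/
open Set

universe u

/-! ### Orbit spaces and pseudo-orbit spaces of finite covers -/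

/-- An element of the finite cover `𝒰`, regarded as a letter of a (discrete) finite
alphabet. -/
structure CoverElt {X : Type u} (𝒰 : Finset (Set X)) where
  val : Set X
  mem : val ∈ 𝒰

instance {X : Type u} (𝒰 : Finset (Set X)) : TopologicalSpace (CoverElt 𝒰) := ⊥
instance {X : Type u} (𝒰 : Finset (Set X)) : DiscreteTopology (CoverElt 𝒰) := ⟨rfl⟩
instance {X : Type u} (𝒰 : Finset (Set X)) : Finite (CoverElt 𝒰) :=
  Finite.of_injective (fun e => (⟨e.val, e.mem⟩ : {U : Set X // U ∈ 𝒰}))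
    (fun a b hab => by cases a; cases b; simpa using hab)

/-- The `𝒰`-orbit space `𝒪(𝒰)`: the closure in the full shift `𝒰^G` of the set of
orbit patterns. -/
def orbitSpace {G X : Type u} [Group G] [TopologicalSpace X]
    (Φ : DynAction G X) (𝒰 : Finset (Set X)) : Set (G → CoverElt 𝒰) :=
  closure {u : G → CoverElt 𝒰 | (⋂ g : G, Φ.act g⁻¹ '' (u g).val).Nonempty}

/-- The `(S,𝒰)`-pseudo-orbit space `𝒫𝒪_S(𝒰)`: all patterns of `(S,𝒰)`-pseudo-orbits. -/
def psOrbitSpace {G X : Type u} [Group G] [TopologicalSpace X]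
    (Φ : DynAction G X) (S : Set G) (𝒰 : Finset (Set X)) : Set (G → CoverElt 𝒰) :=
  {u : G → CoverElt 𝒰 | ∃ x : G → X, IsPseudoOrbitPattern Φ S 𝒰 x (fun g => (u g).val)}

section Aux

variable {G X : Type} [Group G] [TopologicalSpace X]

lemma DynAction.mem_inv_image (Φ : DynAction G X) (g : G) (W : Set X) (x : X) :
    x ∈ Φ.act g⁻¹ '' W ↔ Φ.act g x ∈ W := by
  constructor
  · rintro ⟨w, hw, rfl⟩
    rw [← Φ.act_mul, mul_inv_cancel, Φ.act_one]
    exact hw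
  · intro h
    exact ⟨Φ.act g x, h, by rw [← Φ.act_mul, inv_mul_cancel, Φ.act_one]⟩

lemma coverElt_eq_of_mem {𝒰 : Finset (Set X)} (h𝒰 : IsClopenPartition 𝒰)
    {a b : CoverElt 𝒰} {y : X} (ha : y ∈ a.val) (hb : y ∈ b.val) : a = b := by
  obtain ⟨A, hA⟩ := a
  obtain ⟨B, hB⟩ := b
  have : A = B := by
    by_contra h
    have := h𝒰.2.2 A hA B hB h
    exact absurd (Set.mem_inter ha hb) (by simp [this])
  subst this; rfl

lemma exists_coverElt {𝒰 : Finset (Set X)} (h𝒰 : IsClopenPartition 𝒰) (y : X) :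
    ∃ a : CoverElt 𝒰, y ∈ a.val := by
  have : y ∈ ⋃₀ (𝒰 : Set (Set X)) := by rw [h𝒰.2.1]; trivial
  obtain ⟨U, hU, hyU⟩ := this
  exact ⟨⟨U, hU⟩, hyU⟩

lemma psOrbitSpace_isClosed [CompactSpace X] (Φ : DynAction G X) (S : Finset G)
    {𝒲 : Finset (Set X)} (hcl : ∀ W ∈ 𝒲, IsClosed W) :
    IsClosed (psOrbitSpace Φ (S : Set G) 𝒲) := by
  classical
  rw [← closure_subset_iff_isClosed]
  intro u hu
  -- family of closed constraint sets indexed by finite subsets of G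
  set C : Finset G → Set (G → X) := fun E =>
    {x : G → X | ∀ g ∈ E, ∀ s ∈ S, x (s * g) ∈ (u (s * g)).val ∧
      Φ.act s (x g) ∈ (u (s * g)).val} with hC
  have hCdir : Directed (· ⊇ ·) C := by
    intro E₁ E₂
    refine ⟨E₁ ∪ E₂, fun x hx g hg s hs => hx g (Finset.mem_union_left _ hg) s hs,
      fun x hx g hg s hs => hx g (Finset.mem_union_right _ hg) s hs⟩
  have hCcl : ∀ E, IsClosed (C E) := by
    intro E
    have : C E = ⋂ g ∈ E, ⋂ s ∈ S,
        ((fun x : G → X => x (s * g)) ⁻¹' (u (s * g)).val ∩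
          (fun x : G → X => Φ.act s (x g)) ⁻¹' (u (s * g)).val) := by
      ext x
      simp only [hC, Set.mem_setOf_eq, Set.mem_iInter, Set.mem_inter_iff, Set.mem_preimage]
    rw [this]
    refine isClosed_biInter fun g _ => isClosed_biInter fun s _ => IsClosed.inter ?_ ?_
    · exact (hcl _ (u (s * g)).mem).preimage (continuous_apply (s * g))
    · exact (hcl _ (u (s * g)).mem).preimage ((Φ.continuous_act s).comp (continuous_apply g))
  have hCne : ∀ E, (C E).Nonempty := by
    intro E
    -- the cylinder neighborhood of u determined by coordinates in T
    set T : Finset G := (S ×ˢ E).image (fun p => p.1 * p.2) with hT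
    have hopen : IsOpen {w : G → CoverElt 𝒲 | ∀ h ∈ T, w h = u h} := by
      have : {w : G → CoverElt 𝒲 | ∀ h ∈ T, w h = u h} =
          ⋂ h ∈ T, (fun w : G → CoverElt 𝒲 => w h) ⁻¹' {u h} := by
        ext w; simp [Set.mem_iInter]
      rw [this]
      exact isOpen_biInter_finset fun h _ =>
        (isOpen_discrete _).preimage (continuous_apply h)
    have hmem : u ∈ {w : G → CoverElt 𝒲 | ∀ h ∈ T, w h = u h} := fun h _ => rfl
    obtain ⟨w, hw1, hw2⟩ := mem_closure_iff.1 hu _ hopen hmem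
    obtain ⟨x, _, hx2⟩ := hw2
    refine ⟨x, fun g hg s hs => ?_⟩
    have hsg : s * g ∈ T := by
      rw [hT]
      exact Finset.mem_image.2 ⟨(s, g), Finset.mem_product.2 ⟨hs, hg⟩, rfl⟩
    have h1 := hx2 g s hs
    simp only [hw1 _ hsg] at h1
    exact h1
  have hCcp : ∀ E, IsCompact (C E) := fun E => (hCcl E).isCompact
  obtain ⟨x, hx⟩ := IsCompact.nonempty_iInter_of_directed_nonempty_isCompact_isClosed
    C hCdir hCne hCcp hCcl
  refine ⟨x, fun g => (u g).mem, fun g s hs => ?_⟩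
  have := Set.mem_iInter.1 hx {g}
  exact this g (Finset.mem_singleton_self g) s hs

end Aux

/-- **Lemma 4.1.** For clopen partitions `𝒱 ≻ 𝒰` of a compact totally disconnected
Hausdorff space, the induced map `ι` commutes with the shift, maps `𝒪(𝒱)` onto `𝒪(𝒰)`,
and `𝒪(𝒰) ⊆ ι(𝒫𝒪_S(𝒱)) ⊆ 𝒫𝒪_S(𝒰)`. -/
theorem iota_commutes_and_maps_orbitSpaces
    {G X : Type} [Group G] [Countable G] [TopologicalSpace X]
    [CompactSpace X] [T2Space X] [TotallyDisconnectedSpace X]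
    (Φ : DynAction G X) (S : Finset G)
    (𝒰 𝒱 : Finset (Set X)) (h𝒰 : IsClopenPartition 𝒰) (h𝒱 : IsClopenPartition 𝒱)
    (href : Refines 𝒱 𝒰)
    (ι : CoverElt 𝒱 → CoverElt 𝒰) (hι : ∀ V : CoverElt 𝒱, V.val ⊆ (ι V).val) :
    (∀ (g : G) (u : G → CoverElt 𝒱),
        (fun h => ι (shift G (CoverElt 𝒱) g u h)) = shift G (CoverElt 𝒰) g (fun h => ι (u h))) ∧
    (fun (u : G → CoverElt 𝒱) => fun h => ι (u h)) '' orbitSpace Φ 𝒱 = orbitSpace Φ 𝒰 ∧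
    orbitSpace Φ 𝒰 ⊆
      (fun (u : G → CoverElt 𝒱) => fun h => ι (u h)) '' psOrbitSpace Φ (S : Set G) 𝒱 ∧
    (fun (u : G → CoverElt 𝒱) => fun h => ι (u h)) '' psOrbitSpace Φ (S : Set G) 𝒱 ⊆
      psOrbitSpace Φ (S : Set G) 𝒰 := by
  
  classical
  set f : (G → CoverElt 𝒱) → (G → CoverElt 𝒰) := fun u h => ι (u h) with hf
  have hfc : Continuous f :=
    continuous_pi fun h => Continuous.comp continuous_of_discreteTopology (continuous_apply h)
  set B𝒱 : Set (G → CoverElt 𝒱) :=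
    {u | (⋂ g : G, Φ.act g⁻¹ '' (u g).val).Nonempty} with hB𝒱
  set B𝒰 : Set (G → CoverElt 𝒰) :=
    {u | (⋂ g : G, Φ.act g⁻¹ '' (u g).val).Nonempty} with hB𝒰
  have key : ∀ (u : G → CoverElt 𝒰) (x : X), (∀ g, Φ.act g x ∈ (u g).val) →
      ∃ v : G → CoverElt 𝒱, (∀ g, Φ.act g x ∈ (v g).val) ∧ f v = u := by
    intro u x hx
    refine ⟨fun g => (exists_coverElt h𝒱 (Φ.act g x)).choose,
      fun g => (exists_coverElt h𝒱 (Φ.act g x)).choose_spec, funext fun g => ?_⟩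
    exact coverElt_eq_of_mem h𝒰
      (hι _ (exists_coverElt h𝒱 (Φ.act g x)).choose_spec) (hx g)
  have himg : f '' B𝒱 = B𝒰 := by
    apply Set.Subset.antisymm
    · rintro _ ⟨v, ⟨x, hx⟩, rfl⟩
      refine ⟨x, Set.mem_iInter.2 fun g => (Φ.mem_inv_image g _ x).2 ?_⟩
      exact hι _ ((Φ.mem_inv_image g _ x).1 (Set.mem_iInter.1 hx g))
    · rintro u ⟨x, hx⟩
      have hx' : ∀ g, Φ.act g x ∈ (u g).val := fun g =>
        (Φ.mem_inv_image g _ x).1 (Set.mem_iInter.1 hx g)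
      obtain ⟨v, hv, hfv⟩ := key u x hx'
      exact ⟨v, ⟨x, Set.mem_iInter.2 fun g => (Φ.mem_inv_image g _ x).2 (hv g)⟩, hfv⟩
  refine ⟨fun g u => rfl, ?_, ?_, ?_⟩
  · -- (ii)
    show f '' closure B𝒱 = closure B𝒰
    apply Set.Subset.antisymm
    · calc f '' closure B𝒱 ⊆ closure (f '' B𝒱) := image_closure_subset_closure_image hfc
        _ = closure B𝒰 := by rw [himg]
    · refine closure_minimal ?_ (hfc.isClosedMap _ isClosed_closure)
      rw [← himg]
      exact Set.image_mono (f := f) subset_closure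
  · -- (iii), first inclusion
    have hclosed : IsClosed (f '' psOrbitSpace Φ (S : Set G) 𝒱) :=
      hfc.isClosedMap _ (psOrbitSpace_isClosed Φ S fun W hW => (h𝒱.1 W hW).1.1)
    refine closure_minimal ?_ hclosed
    rintro u ⟨x, hx⟩
    have hx' : ∀ g, Φ.act g x ∈ (u g).val := fun g =>
      (Φ.mem_inv_image g _ x).1 (Set.mem_iInter.1 hx g)
    obtain ⟨v, hv, hfv⟩ := key u x hx'
    refine ⟨v, ⟨fun g => Φ.act g x, fun g => (v g).mem, fun g s hs => ?_⟩, hfv⟩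
    refine ⟨hv (s * g), ?_⟩
    rw [← Φ.act_mul]
    exact hv (s * g)
  · -- (iii), second inclusion
    rintro _ ⟨v, ⟨x, _, hx2⟩, rfl⟩
    exact ⟨x, fun g => (ι (v g)).mem, fun g s hs =>
      ⟨hι _ (hx2 g s hs).1, hι _ (hx2 g s hs).2⟩⟩
end

section
/- Let (X, G, Φ) be a dynamical system where X is a compact totally disconnected Hausdorff space, and let S be a finite subset of G. Then Φ has the S-shadowing property if and only if for every 𝒰 ∈ Part(X) there exists 𝒱 ∈ Part(X) with 𝒱 ≻ 𝒰 such that for every 𝒲 ∈ Part(X) with 𝒲 ≻ 𝒱, ι(𝒫𝒪_S(𝒲)) = 𝒪(𝒰), where ι : 𝒲^G → 𝒰^G is the induced map. -/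
open Set

universe u

/-! ### Auxiliary lemmas -/

section AuxLemmas

variable {G X : Type u} [Group G] [TopologicalSpace X]

theorem CoverElt.ext' {𝒰 : Finset (Set X)} {a b : CoverElt 𝒰} (h : a.val = b.val) : a = b := by
  cases a; cases b; simpa using h

theorem act_inv_image (Φ : DynAction G X) (g : G) (V : Set X) :
    Φ.act g⁻¹ '' V = Φ.act g ⁻¹' V := by
  have key : ∀ y : X, Φ.act g (Φ.act g⁻¹ y) = y := by
    intro y
    rw [← Φ.act_mul, mul_inv_cancel, Φ.act_one]
  have key' : ∀ y : X, Φ.act g⁻¹ (Φ.act g y) = y := by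
    intro y
    rw [← Φ.act_mul, inv_mul_cancel, Φ.act_one]
  ext x
  constructor
  · rintro ⟨y, hy, rfl⟩
    simpa [key y] using hy
  · intro hx
    exact ⟨Φ.act g x, hx, key' x⟩

theorem part_unique {𝒰 : Finset (Set X)} (h : IsClopenPartition 𝒰) {U V : Set X}
    (hU : U ∈ 𝒰) (hV : V ∈ 𝒰) {x : X} (hxU : x ∈ U) (hxV : x ∈ V) : U = V := by
  by_contra hne
  have h0 := h.2.2 U hU V hV hne
  have : x ∈ U ∩ V := ⟨hxU, hxV⟩
  rw [h0] at this
  exact this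

theorem part_exists {𝒰 : Finset (Set X)} (h : IsClopenPartition 𝒰) (x : X) :
    ∃ U ∈ 𝒰, x ∈ U := by
  have hx : x ∈ ⋃₀ (𝒰 : Set (Set X)) := h.2.1 ▸ mem_univ x
  obtain ⟨U, hU, hxU⟩ := hx
  exact ⟨U, hU, hxU⟩

theorem foc_of_partition {𝒰 : Finset (Set X)} (h : IsClopenPartition 𝒰) : IsFOC 𝒰 :=
  ⟨fun U hU => (h.1 U hU).1.2, h.2.1⟩

/-- For a clopen partition on a compact space, the orbit space is exactly the set of
honest orbit patterns (no closure needed). -/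
theorem orbitSpace_eq [CompactSpace X] (Φ : DynAction G X) {𝒰 : Finset (Set X)}
    (h𝒰 : IsClopenPartition 𝒰) :
    orbitSpace Φ 𝒰 = {u : G → CoverElt 𝒰 | ∃ z : X, ∀ g : G, Φ.act g z ∈ (u g).val} := by
  have hset : {u : G → CoverElt 𝒰 | (⋂ g : G, Φ.act g⁻¹ '' (u g).val).Nonempty}
      = {u : G → CoverElt 𝒰 | ∃ z : X, ∀ g : G, Φ.act g z ∈ (u g).val} := by
    ext u
    simp only [mem_setOf_eq, act_inv_image]
    constructor
    · rintro ⟨z, hz⟩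
      exact ⟨z, fun g => mem_iInter.1 hz g⟩
    · rintro ⟨z, hz⟩
      exact ⟨z, mem_iInter.2 hz⟩
  rw [orbitSpace, hset]
  apply IsClosed.closure_eq
  rw [← isOpen_compl_iff, isOpen_iff_forall_mem_open]
  intro u hu
  have hempty : (univ : Set X) ∩ ⋂ g : G, Φ.act g ⁻¹' (u g).val = ∅ := by
    rw [univ_inter, eq_empty_iff_forall_notMem]
    intro z hz
    exact hu ⟨z, fun g => mem_iInter.1 hz g⟩
  obtain ⟨F, hF⟩ := isCompact_univ.elim_finite_subfamily_closed
    (fun g : G => Φ.act g ⁻¹' (u g).val)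
    (fun g => ((h𝒰.1 _ (u g).mem).1.1).preimage (Φ.continuous_act g)) hempty
  refine ⟨⋂ g ∈ F, {u' : G → CoverElt 𝒰 | u' g = u g}, ?_, ?_, ?_⟩
  · intro u' hu'
    simp only [mem_compl_iff, mem_setOf_eq]
    rintro ⟨z, hz⟩
    rw [univ_inter, eq_empty_iff_forall_notMem] at hF
    apply hF z
    refine mem_iInter₂.2 fun g hg => ?_
    have h1 : u' g = u g := mem_iInter₂.1 hu' g hg
    rw [← h1]
    exact hz g
  · refine isOpen_biInter_finset fun g _ => ?_
    have : {u' : G → CoverElt 𝒰 | u' g = u g} = (fun u' : G → CoverElt 𝒰 => u' g) ⁻¹' {u g} :=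
      rfl
    rw [this]
    exact (continuous_apply g).isOpen_preimage _ (isOpen_discrete _)
  · exact mem_iInter₂.2 fun g _ => rfl

/-- Every finite open cover of a compact totally disconnected Hausdorff space is refined
by a finite partition into nonempty clopen sets. -/
theorem exists_clopenPartition_refines [CompactSpace X] [T2Space X] [TotallyDisconnectedSpace X]
    (𝒰 : Finset (Set X)) (h : IsFOC 𝒰) :
    ∃ 𝒱 : Finset (Set X), IsClopenPartition 𝒱 ∧ Refines 𝒱 𝒰 := by
  classical
  have hC : ∀ x : X, ∃ C : Set X, IsClopen C ∧ x ∈ C ∧ ∃ U ∈ 𝒰, C ⊆ U := by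
    intro x
    have hx : x ∈ ⋃₀ (𝒰 : Set (Set X)) := h.2 ▸ mem_univ x
    obtain ⟨U, hU, hxU⟩ := hx
    obtain ⟨C, hCc, hxC, hCU⟩ := compact_exists_isClopen_in_isOpen (h.1 U hU) hxU
    exact ⟨C, hCc, hxC, U, hU, hCU⟩
  choose C hCc hxC hCU using hC
  obtain ⟨t, ht⟩ := isCompact_univ.elim_finite_subcover C (fun x => (hCc x).2)
    (fun x _ => mem_iUnion.2 ⟨x, hxC x⟩)
  set E : Fin t.card → Set X := fun i => C (t.equivFin.symm i).1 with hE
  have hEc : ∀ i, IsClopen (E i) := fun i => hCc _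
  have hEU : ∀ i, ∃ U ∈ 𝒰, E i ⊆ U := fun i => hCU _
  have hEcov : ∀ x : X, ∃ i, x ∈ E i := by
    intro x
    obtain ⟨y, hyt, hxy⟩ := mem_iUnion₂.1 (ht (mem_univ x))
    refine ⟨t.equivFin ⟨y, hyt⟩, ?_⟩
    simpa [hE, Equiv.symm_apply_apply] using hxy
  set D : Fin t.card → Set X := fun i => E i \ ⋃ j : Fin t.card, ⋃ _ : j < i, E j with hD
  have hDc : ∀ i, IsClopen (D i) := fun i =>
    (hEc i).diff (isClopen_iUnion_of_finite fun j => isClopen_iUnion_of_finite fun _ => hEc j)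
  have hDsub : ∀ i, D i ⊆ E i := fun i => diff_subset
  have hDdisj' : ∀ i j : Fin t.card, i < j → D i ∩ D j = ∅ := by
    intro i j hij
    rw [eq_empty_iff_forall_notMem]
    rintro x ⟨hxi, hxj⟩
    exact hxj.2 (mem_iUnion.2 ⟨i, mem_iUnion.2 ⟨hij, hxi.1⟩⟩)
  have hDdisj : ∀ i j : Fin t.card, i ≠ j → D i ∩ D j = ∅ := by
    intro i j hij
    rcases hij.lt_or_gt with h' | h'
    · exact hDdisj' i j h'
    · rw [inter_comm]; exact hDdisj' j i h'
  have hDcov : ∀ x : X, ∃ i, x ∈ D i := by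
    intro x
    have hne : (Finset.univ.filter (fun i => x ∈ E i)).Nonempty := by
      obtain ⟨i, hi⟩ := hEcov x
      exact ⟨i, Finset.mem_filter.2 ⟨Finset.mem_univ i, hi⟩⟩
    refine ⟨(Finset.univ.filter (fun i => x ∈ E i)).min' hne, ?_, ?_⟩
    · exact (Finset.mem_filter.1 (Finset.min'_mem _ hne)).2
    · intro hmem
      obtain ⟨j, hj⟩ := mem_iUnion.1 hmem
      obtain ⟨hji, hxj⟩ := mem_iUnion.1 hj
      exact absurd (Finset.min'_le _ j (Finset.mem_filter.2 ⟨Finset.mem_univ j, hxj⟩))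
        (not_le.2 hji)
  refine ⟨(Finset.univ.filter (fun i => (D i).Nonempty)).image D, ⟨?_, ?_, ?_⟩, ?_⟩
  · intro V hV
    obtain ⟨i, hi, rfl⟩ := Finset.mem_image.1 hV
    exact ⟨hDc i, (Finset.mem_filter.1 hi).2⟩
  · rw [eq_univ_iff_forall]
    intro x
    obtain ⟨i, hi⟩ := hDcov x
    exact mem_sUnion.2 ⟨D i, Finset.mem_coe.2 (Finset.mem_image.2
      ⟨i, Finset.mem_filter.2 ⟨Finset.mem_univ i, ⟨x, hi⟩⟩, rfl⟩), hi⟩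
  · intro U hU V hV hUV
    obtain ⟨i, hi, rfl⟩ := Finset.mem_image.1 hU
    obtain ⟨j, hj, rfl⟩ := Finset.mem_image.1 hV
    exact hDdisj i j (fun h' => hUV (by rw [h']))
  · intro V hV
    obtain ⟨i, hi, rfl⟩ := Finset.mem_image.1 hV
    obtain ⟨U, hU, hEUi⟩ := hEU i
    exact ⟨U, hU, (hDsub i).trans hEUi⟩

/-- A pattern in the pseudo-orbit space of a clopen partition admits a pseudo-orbit
that actually visits the pattern sets at every coordinate. -/
theorem exists_po_mem (Φ : DynAction G X) (S : Set G) {𝒲 : Finset (Set X)}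
    (h𝒲 : IsClopenPartition 𝒲) {w : G → CoverElt 𝒲}
    (hw : w ∈ psOrbitSpace Φ S 𝒲) :
    ∃ x : G → X, IsPseudoOrbitPattern Φ S 𝒲 x (fun g => (w g).val) ∧
      ∀ g : G, x g ∈ (w g).val := by
  rcases S.eq_empty_or_nonempty with hS | ⟨s, hs⟩
  · have hne : ∀ g : G, ((w g).val).Nonempty := fun g => (h𝒲.1 _ (w g).mem).2
    choose x hx using hne
    refine ⟨x, ⟨fun g => (w g).mem, ?_⟩, hx⟩
    intro g s hsS
    rw [hS] at hsS
    exact absurd hsS (notMem_empty s)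
  · obtain ⟨x, hx⟩ := hw
    refine ⟨x, hx, fun g => ?_⟩
    have h1 := (hx.2 (s⁻¹ * g) s hs).1
    rwa [mul_inv_cancel_left] at h1

end AuxLemmas

/-- **Lemma 4.3.** Characterization of the `S`-shadowing property on compact totally
disconnected Hausdorff spaces via clopen partitions: `ι(𝒫𝒪_S(𝒲)) = 𝒪(𝒰)` for all
sufficiently fine partitions `𝒲`. -/
theorem shadowing_iff_iota_psOrbit_eq_orbit
    {G X : Type} [Group G] [Countable G] [TopologicalSpace X]
    [CompactSpace X] [T2Space X] [TotallyDisconnectedSpace X]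
    (Φ : DynAction G X) (S : Finset G) :
    ShadowingProperty Φ (S : Set G) ↔
      ∀ 𝒰 : Finset (Set X), IsClopenPartition 𝒰 →
        ∃ 𝒱 : Finset (Set X), IsClopenPartition 𝒱 ∧ Refines 𝒱 𝒰 ∧
          ∀ 𝒲 : Finset (Set X), IsClopenPartition 𝒲 → Refines 𝒲 𝒱 →
            ∀ ι : CoverElt 𝒲 → CoverElt 𝒰, (∀ W : CoverElt 𝒲, W.val ⊆ (ι W).val) →
              (fun (u : G → CoverElt 𝒲) => fun h => ι (u h)) ''
                  psOrbitSpace Φ (S : Set G) 𝒲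
                = orbitSpace Φ 𝒰 := by
  classical
  constructor
  · -- Shadowing ⇒ combinatorial condition
    intro hshadAll 𝒰 h𝒰
    obtain ⟨𝒱₀, h𝒱₀, hshad⟩ := hshadAll 𝒰 (foc_of_partition h𝒰)
    -- common refinement of 𝒱₀ and 𝒰
    set 𝒞 : Finset (Set X) := Finset.image₂ (fun a b => a ∩ b) 𝒱₀ 𝒰 with h𝒞
    have h𝒞foc : IsFOC 𝒞 := by
      constructor
      · intro W hW
        obtain ⟨a, ha, b, hb, rfl⟩ := Finset.mem_image₂.1 hW
        exact (h𝒱₀.1 a ha).inter ((h𝒰.1 b hb).1.2)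
      · rw [eq_univ_iff_forall]
        intro x
        have hx1 : x ∈ ⋃₀ (𝒱₀ : Set (Set X)) := h𝒱₀.2 ▸ mem_univ x
        obtain ⟨a, ha, hxa⟩ := hx1
        obtain ⟨b, hb, hxb⟩ := part_exists h𝒰 x
        exact mem_sUnion.2 ⟨a ∩ b, Finset.mem_coe.2 (Finset.mem_image₂.2 ⟨a, ha, b, hb, rfl⟩),
          hxa, hxb⟩
    obtain ⟨𝒱, h𝒱, h𝒱ref⟩ := exists_clopenPartition_refines 𝒞 h𝒞foc
    have h𝒱𝒰 : Refines 𝒱 𝒰 := by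
      intro V hV
      obtain ⟨Cc, hCc, hVC⟩ := h𝒱ref V hV
      obtain ⟨a, ha, b, hb, rfl⟩ := Finset.mem_image₂.1 hCc
      exact ⟨b, hb, hVC.trans inter_subset_right⟩
    refine ⟨𝒱, h𝒱, h𝒱𝒰, ?_⟩
    intro 𝒲 h𝒲 h𝒲𝒱 ι hι
    have h𝒲𝒱₀ : ∀ W : CoverElt 𝒲, ∃ V₀ ∈ 𝒱₀, W.val ⊆ V₀ := by
      intro W
      obtain ⟨V, hV, hWV⟩ := h𝒲𝒱 W.val W.mem
      obtain ⟨Cc, hCc, hVC⟩ := h𝒱ref V hV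
      obtain ⟨a, ha, b, hb, rfl⟩ := Finset.mem_image₂.1 hCc
      exact ⟨a, ha, (hWV.trans hVC).trans inter_subset_left⟩
    choose ρ hρ hρsub using h𝒲𝒱₀
    apply Set.Subset.antisymm
    · rintro u ⟨w, hw, rfl⟩
      obtain ⟨x, hx, hxw⟩ := exists_po_mem Φ _ h𝒲 hw
      have hpo : IsPseudoOrbit Φ (S : Set G) 𝒱₀ x := by
        refine ⟨fun g => ρ (w g), ⟨fun g => hρ _, fun g s hs => ?_⟩⟩
        exact ⟨hρsub _ ((hx.2 g s hs).1), hρsub _ ((hx.2 g s hs).2)⟩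
      obtain ⟨z, hz⟩ := hshad x hpo
      rw [orbitSpace_eq Φ h𝒰]
      refine ⟨z, fun g => ?_⟩
      obtain ⟨U, hU, hzU, hxU⟩ := hz g
      have hUe : U = (ι (w g)).val :=
        part_unique h𝒰 hU (ι (w g)).mem hxU (hι (w g) (hxw g))
      exact hUe ▸ hzU
    · intro u hu
      rw [orbitSpace_eq Φ h𝒰] at hu
      obtain ⟨z, hz⟩ := hu
      have hWex : ∀ g : G, ∃ W ∈ 𝒲, Φ.act g z ∈ W := fun g => part_exists h𝒲 _
      choose W hWmem hWz using hWex
      refine ⟨fun g => ⟨W g, hWmem g⟩, ⟨fun g => Φ.act g z,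
        ⟨fun g => hWmem g, fun g s hs => ⟨hWz (s * g), ?_⟩⟩⟩, ?_⟩
      · show Φ.act s (Φ.act g z) ∈ W (s * g)
        rw [← Φ.act_mul]
        exact hWz (s * g)
      · funext g
        refine CoverElt.ext' ?_
        exact part_unique h𝒰 (ι ⟨W g, hWmem g⟩).mem (u g).mem
          (hι ⟨W g, hWmem g⟩ (hWz g)) (hz g)
  · -- combinatorial condition ⇒ shadowing
    intro hcond 𝒰₀ h𝒰₀
    obtain ⟨𝒰, h𝒰, h𝒰ref⟩ := exists_clopenPartition_refines 𝒰₀ h𝒰₀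
    obtain ⟨𝒱, h𝒱, h𝒱𝒰, hmain⟩ := hcond 𝒰 h𝒰
    refine ⟨𝒱, foc_of_partition h𝒱, ?_⟩
    rintro x ⟨V, hVpat⟩
    have hι : ∀ Vc : CoverElt 𝒱, ∃ U ∈ 𝒰, Vc.val ⊆ U := fun Vc => h𝒱𝒰 Vc.val Vc.mem
    choose f hf hfsub using hι
    have heq := hmain 𝒱 h𝒱 (fun V' hV' => ⟨V', hV', subset_rfl⟩)
      (fun Vc => ⟨f Vc, hf Vc⟩) (fun Vc => hfsub Vc)
    have hWex : ∀ g : G, ∃ W ∈ 𝒱, x g ∈ W := fun g => part_exists h𝒱 _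
    choose W hWmem hWx using hWex
    have hwps : (fun g => (⟨W g, hWmem g⟩ : CoverElt 𝒱)) ∈ psOrbitSpace Φ (S : Set G) 𝒱 := by
      refine ⟨x, ⟨fun g => hWmem g, fun g s hs => ⟨hWx _, ?_⟩⟩⟩
      show Φ.act s (x g) ∈ W (s * g)
      have h1 := (hVpat.2 g s hs).1
      have h2 := (hVpat.2 g s hs).2
      have hWV : W (s * g) = V (s * g) :=
        part_unique h𝒱 (hWmem _) (hVpat.1 _) (hWx _) h1
      rw [hWV]
      exact h2
    have horb : (fun h => (⟨f ⟨W h, hWmem h⟩, hf ⟨W h, hWmem h⟩⟩ : CoverElt 𝒰))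
        ∈ orbitSpace Φ 𝒰 := by
      rw [← heq]
      exact ⟨fun g => ⟨W g, hWmem g⟩, hwps, rfl⟩
    rw [orbitSpace_eq Φ h𝒰] at horb
    obtain ⟨z, hz⟩ := horb
    refine ⟨z, fun g => ?_⟩
    obtain ⟨U₀, hU₀, hsub⟩ := h𝒰ref (f ⟨W g, hWmem g⟩) (hf ⟨W g, hWmem g⟩)
    exact ⟨U₀, hU₀, hsub (hz g), hsub (hfsub ⟨W g, hWmem g⟩ (hWx g))⟩
end
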